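/- arXiv:1708.06657 — 3 statements merged into one kernel-verified Lean document; each statement's English description precedes it below -/
import Mathlib

section
/- Let Φ : ℝ^d → [0,∞) be an N_∞ function and let L : [0,T]×ℝ^d×ℝ^d → ℝ be measurable in t for each (x,y), continuously differentiable in (x,y) for a.e. t, and satisfy the structure condition (S) with constants λ, Λ > 0. Then for every u ∈ W^1L^Φ([0,T],ℝ^d) with d(u', L^∞) < Λ, the functions t ↦ L(t,u(t),u'(t)), t ↦ |∇_xL(t,u(t),u'(t))| and t ↦ Φ*(∇_yL(t,u(t),u'(t))/λ) all belong to L^1([0,T]); in particular the action integral I(u) = ∫_0^T L(t,u(t),u'(t)) dt is finitely defined on {u ∈ W^1L^Φ : d(u', L^∞) < Λ}. -/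
open MeasureTheory Filter Set
open scoped ENNReal RealInnerProductSpace Topology

noncomputable section

/-- `ℝ^d` with the euclidean norm. -/
abbrev Ed (d : ℕ) : Type := EuclideanSpace ℝ (Fin d)

/-- `Φ` is an `N_∞` function: differentiable, convex, nonnegative, vanishing exactly at `0`,
even, and superlinear at infinity. -/
def IsNInf {m : ℕ} (Φ : Ed m → ℝ) : Prop :=
  Differentiable ℝ Φ ∧ ConvexOn ℝ Set.univ Φ ∧ (∀ y, 0 ≤ Φ y) ∧ Φ 0 = 0 ∧
    (∀ y, y ≠ 0 → 0 < Φ y) ∧ (∀ y, Φ (-y) = Φ y) ∧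
    Tendsto (fun y => Φ y / ‖y‖) (comap (fun y : Ed m => ‖y‖) atTop) atTop

variable {d : ℕ}

/-- The modular `ρ_Φ(u) = ∫_0^T Φ(u(t)) dt`, as an extended nonnegative real. -/
def rhoE (T : ℝ) (Φ : Ed d → ℝ) (u : ℝ → Ed d) : ℝ≥0∞ :=
  ∫⁻ t in Icc (0:ℝ) T, ENNReal.ofReal (Φ (u t))

/-- `u ∈ L^Φ([0,T], ℝ^d)`. -/
def MemLphi (T : ℝ) (Φ : Ed d → ℝ) (u : ℝ → Ed d) : Prop :=
  AEMeasurable u (volume.restrict (Icc (0:ℝ) T)) ∧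
    ∃ l : ℝ, 0 < l ∧ rhoE T Φ (fun t => l • u t) < ⊤

/-- The Luxemburg norm of `u` on `[0,T]`. -/
def luxNorm (T : ℝ) (Φ : Ed d → ℝ) (u : ℝ → Ed d) : ℝ :=
  sInf {l : ℝ | 0 < l ∧ rhoE T Φ (fun t => l⁻¹ • u t) ≤ 1}

/-- `u ∈ W^1L^Φ([0,T], ℝ^d)` with a.e. derivative `u'` : `u` is absolutely continuous,
being the integral of the (integrable) function `u'`, and `u' ∈ L^Φ`. -/
def MemW1Lphi (T : ℝ) (Φ : Ed d → ℝ) (u u' : ℝ → Ed d) : Prop :=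
  IntegrableOn u' (Icc (0:ℝ) T) ∧ MemLphi T Φ u' ∧
    ∀ t ∈ Icc (0:ℝ) T, u t = u 0 + ∫ s in (0:ℝ)..t, u' s

/-- The complementary (conjugate) function `Φ*(ζ) = sup_y (y⬝ζ - Φ(y))`. -/
def conjFn (Φ : Ed d → ℝ) (z : Ed d) : ℝ := ⨆ y : Ed d, (⟪y, z⟫ - Φ y)

/-- The Luxemburg distance from `u` to `L^∞([0,T],ℝ^d)`. -/
def distLinf (T : ℝ) (Φ : Ed d → ℝ) (u : ℝ → Ed d) : ℝ :=
  sInf {r : ℝ | ∃ v : ℝ → Ed d, Measurable v ∧ (∃ C : ℝ, ∀ t, ‖v t‖ ≤ C) ∧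
    r = luxNorm T Φ (fun t => u t - v t)}

/-- The Lagrangian `L` is measurable in `t` for each `(x,y)` and continuously
differentiable in `(x,y)` for a.e. `t`. -/
def CaraL (T : ℝ) (L : ℝ → Ed d → Ed d → ℝ) : Prop :=
  (∀ x y, Measurable fun t => L t x y) ∧
    ∀ᵐ t ∂(volume.restrict (Icc (0:ℝ) T)), ContDiff ℝ 1 fun p : Ed d × Ed d => L t p.1 p.2

/-- The structure condition (S). -/
def CondS (T : ℝ) (Φ : Ed d → ℝ) (L : ℝ → Ed d → Ed d → ℝ) (lam Lam : ℝ) : Prop :=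
  ∃ a : Ed d → ℝ, ∃ b : ℝ → ℝ, Continuous a ∧ (∀ x, 0 ≤ a x) ∧
    IntegrableOn b (Icc (0:ℝ) T) ∧ (∀ t, 0 ≤ b t) ∧
    ∀ᵐ t ∂(volume.restrict (Icc (0:ℝ) T)), ∀ x y,
      |L t x y| + ‖gradient (fun x' => L t x' y) x‖ +
          conjFn Φ (lam⁻¹ • gradient (fun y' => L t x y') y) ≤
        a x * (b t + Φ (Lam⁻¹ • y))

section helpers

variable {m : ℕ} {Φ : Ed m → ℝ}

lemma superlinear_bound (hΦ : IsNInf Φ) (M : ℝ) :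
    ∃ R : ℝ, ∀ y : Ed m, R ≤ ‖y‖ → M ≤ Φ y / ‖y‖ := by
  have h := hΦ.2.2.2.2.2.2.eventually (eventually_ge_atTop M)
  rw [eventually_comap] at h
  rw [eventually_atTop] at h
  obtain ⟨R, hR⟩ := h
  exact ⟨R, fun y hy => hR ‖y‖ hy y rfl⟩

lemma conj_bddAbove (hΦ : IsNInf Φ) (z : Ed m) :
    BddAbove (Set.range fun y : Ed m => ⟪y, z⟫ - Φ y) := by
  obtain ⟨R, hR⟩ := superlinear_bound hΦ (‖z‖ + 1)
  set R' := max R 1 with hR'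
  have hcont : Continuous fun y : Ed m => ⟪y, z⟫ - Φ y :=
    (continuous_id.inner continuous_const).sub hΦ.1.continuous
  obtain ⟨y₀, _, hy₀⟩ := (isCompact_closedBall (0 : Ed m) R').exists_isMaxOn
    ⟨0, by simp; exact le_trans zero_le_one (le_max_right R 1)⟩ hcont.continuousOn
  refine ⟨max 0 (⟪y₀, z⟫ - Φ y₀), ?_⟩
  rintro x ⟨y, rfl⟩
  by_cases hy : ‖y‖ ≤ R'
  · exact le_max_of_le_right (hy₀ (show y ∈ Metric.closedBall (0:Ed m) R' by
      simpa [Metric.mem_closedBall, dist_eq_norm] using hy))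
  · push_neg at hy
    have h1 : (1:ℝ) ≤ ‖y‖ := le_trans (le_max_right R 1) hy.le
    have h0 : (0:ℝ) < ‖y‖ := lt_of_lt_of_le one_pos h1
    have hΦy : (‖z‖ + 1) * ‖y‖ ≤ Φ y := by
      have := hR y (le_trans (le_max_left R 1) hy.le)
      rw [le_div_iff₀ h0] at this
      exact this
    have : ⟪y, z⟫ - Φ y ≤ 0 := by
      have hin : ⟪y, z⟫ ≤ ‖y‖ * ‖z‖ := real_inner_le_norm y z
      nlinarith
    exact le_max_of_le_left this

lemma conj_nonneg (hΦ : IsNInf Φ) (z : Ed m) : 0 ≤ conjFn Φ z := by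
  have := le_ciSup (conj_bddAbove hΦ z) (0 : Ed m)
  simp [hΦ.2.2.2.1] at this; exact this

lemma conj_convexOn (hΦ : IsNInf Φ) : ConvexOn ℝ Set.univ (conjFn Φ) := by
  refine ⟨convex_univ, fun z₁ _ z₂ _ a b ha hb hab => ?_⟩
  refine ciSup_le fun y => ?_
  have h1 : ⟪y, a • z₁ + b • z₂⟫ - Φ y
      = a * (⟪y, z₁⟫ - Φ y) + b * (⟪y, z₂⟫ - Φ y) := by
    rw [inner_add_right, real_inner_smul_right, real_inner_smul_right]
    linear_combination (Φ y) * hab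
  rw [h1]
  exact add_le_add
    (mul_le_mul_of_nonneg_left (le_ciSup (conj_bddAbove hΦ z₁) y) ha)
    (mul_le_mul_of_nonneg_left (le_ciSup (conj_bddAbove hΦ z₂) y) hb)

lemma conj_continuous (hΦ : IsNInf Φ) : Continuous (conjFn Φ) := by
  rw [← continuousOn_univ]
  exact (conj_convexOn hΦ).continuousOn isOpen_univ

lemma Phi_smul_le (hΦ : IsNInf Φ) {c : ℝ} (h0 : 0 ≤ c) (h1 : c ≤ 1) (y : Ed m) :
    Φ (c • y) ≤ c * Φ y := by
  have := hΦ.2.1.2 (mem_univ y) (mem_univ (0 : Ed m)) h0 (by linarith : (0:ℝ) ≤ 1 - c)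
    (by ring)
  simpa [hΦ.2.2.2.1] using this

lemma Phi_bound_ball (hΦ : IsNInf Φ) (r : ℝ) :
    ∃ M : ℝ, 0 ≤ M ∧ ∀ y : Ed m, ‖y‖ ≤ r → Φ y ≤ M := by
  obtain ⟨y₀, _, hy₀⟩ := (isCompact_closedBall (0 : Ed m) (max r 0)).exists_isMaxOn
    ⟨0, by simp⟩ hΦ.1.continuous.continuousOn
  refine ⟨Φ y₀, hΦ.2.2.1 y₀, fun y hy => ?_⟩
  exact hy₀ (show y ∈ Metric.closedBall (0:Ed m) (max r 0) by
    simpa [Metric.mem_closedBall, dist_eq_norm] using le_trans hy (le_max_left r 0))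

lemma measurable_fderiv_applied {G : ℝ → Ed m → ℝ}
    (hmeas : ∀ x, Measurable fun t => G t x)
    (hdiff : ∀ t, Differentiable ℝ (G t)) (x v : Ed m) :
    Measurable fun t => fderiv ℝ (G t) x v := by
  have hkey : ∀ t, Tendsto (fun n : ℕ => slope (fun s : ℝ => G t (x + s • v)) 0 ((n+1:ℝ)⁻¹))
      atTop (𝓝 (fderiv ℝ (G t) x v)) := by
    intro t
    have h2 : HasDerivAt (fun s : ℝ => x + s • v) v 0 := by
      simpa using ((hasDerivAt_id (0:ℝ)).smul_const v).const_add x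
    have h1 : HasDerivAt (fun s : ℝ => G t (x + s • v)) (fderiv ℝ (G t) x v) 0 := by
      have hfd : HasFDerivAt (G t) (fderiv ℝ (G t) x) ((fun s : ℝ => x + s • v) 0) := by
        simpa using ((hdiff t) x).hasFDerivAt
      exact hfd.comp_hasDerivAt (0:ℝ) h2
    have hslope := hasDerivAt_iff_tendsto_slope.mp h1
    have hseq : Tendsto (fun n : ℕ => ((n+1:ℝ))⁻¹) atTop (𝓝[≠] (0:ℝ)) := by
      refine tendsto_nhdsWithin_of_tendsto_nhds_of_eventually_within _ ?_ ?_
      · simpa using tendsto_one_div_add_atTop_nhds_zero_nat (𝕜 := ℝ)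
      · exact Eventually.of_forall fun n => by
          simp only [mem_compl_iff, mem_singleton_iff]
          positivity
    exact hslope.comp hseq
  refine measurable_of_tendsto_metrizable' atTop (f := fun (n : ℕ) t =>
    slope (fun s : ℝ => G t (x + s • v)) 0 ((n+1:ℝ)⁻¹)) (fun n => ?_) ?_
  · have : (fun t => slope (fun s : ℝ => G t (x + s • v)) 0 ((n+1:ℝ)⁻¹))
        = fun t => ((n+1:ℝ)⁻¹ - 0)⁻¹ • (G t (x + ((n+1:ℝ)⁻¹) • v) - G t (x + (0:ℝ) • v)) := by
      funext t; rw [slope_def_module]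
    rw [this]
    exact (((hmeas _).sub (hmeas _)).const_smul ((((n:ℝ)+1))⁻¹ - 0)⁻¹)
  · rw [tendsto_pi_nhds]; exact hkey

lemma measurable_gradient_t {G : ℝ → Ed m → ℝ}
    (hmeas : ∀ x, Measurable fun t => G t x)
    (hdiff : ∀ t, Differentiable ℝ (G t)) (x : Ed m) :
    Measurable fun t => gradient (G t) x := by
  set b := EuclideanSpace.basisFun (Fin m) ℝ
  have hexp : ∀ t, gradient (G t) x = ∑ i, (fderiv ℝ (G t) x (b i)) • b i := by
    intro t
    have := b.sum_repr' (gradient (G t) x)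
    rw [← this]
    congr 1
    funext i
    congr 1
    rw [real_inner_comm]
    show ⟪gradient (G t) x, b i⟫ = _
    rw [gradient]
    rw [InnerProductSpace.toDual_symm_apply]
  simp only [hexp]
  exact Finset.measurable_sum _ fun i _ =>
    (measurable_fderiv_applied hmeas hdiff x (b i)).smul_const (b i)

lemma continuous_grad_fst {F : Ed m × Ed m → ℝ} (hF : ContDiff ℝ 1 F) :
    Continuous fun p : Ed m × Ed m => gradient (fun x' => F (x', p.2)) p.1 := by
  have heq : ∀ p : Ed m × Ed m, gradient (fun x' => F (x', p.2)) p.1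
      = (InnerProductSpace.toDual ℝ (Ed m)).symm
          ((fderiv ℝ F p).comp (ContinuousLinearMap.inl ℝ (Ed m) (Ed m))) := by
    intro p
    rw [gradient]
    congr 1
    exact (((hF.differentiable one_ne_zero) p).hasFDerivAt.comp p.1
      (hasFDerivAt_prodMk_left p.1 p.2)).fderiv
  simp only [heq]
  exact (InnerProductSpace.toDual ℝ (Ed m)).symm.continuous.comp
    ((hF.continuous_fderiv one_ne_zero).clm_comp continuous_const)

lemma continuous_grad_snd {F : Ed m × Ed m → ℝ} (hF : ContDiff ℝ 1 F) :
    Continuous fun p : Ed m × Ed m => gradient (fun y' => F (p.1, y')) p.2 := by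
  have heq : ∀ p : Ed m × Ed m, gradient (fun y' => F (p.1, y')) p.2
      = (InnerProductSpace.toDual ℝ (Ed m)).symm
          ((fderiv ℝ F p).comp (ContinuousLinearMap.inr ℝ (Ed m) (Ed m))) := by
    intro p
    rw [gradient]
    congr 1
    exact (((hF.differentiable one_ne_zero) p).hasFDerivAt.comp p.2
      (hasFDerivAt_prodMk_right p.1 p.2)).fderiv
  simp only [heq]
  exact (InnerProductSpace.toDual ℝ (Ed m)).symm.continuous.comp
    ((hF.continuous_fderiv one_ne_zero).clm_comp continuous_const)

end helpers

set_option maxHeartbeats 1000000 in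
/-- If the Lagrangian `L` satisfies the structure condition (S), then
for every `u ∈ W^1L^Φ` with `d(u', L^∞) < Λ` the functions `t ↦ L(t,u,u')`,
`t ↦ ∇ₓL(t,u,u')` and `t ↦ Φ*(∇_yL(t,u,u')/λ)` are integrable on `[0,T]`; in
particular the action integral is finitely defined there. -/
theorem statement13 {d : ℕ} (T : ℝ) (hT : 0 < T) (Φ : Ed d → ℝ) (hΦ : IsNInf Φ)
    (L : ℝ → Ed d → Ed d → ℝ) (lam Lam : ℝ) (hlam : 0 < lam) (hLam : 0 < Lam)
    (hLC : CaraL T L) (hLS : CondS T Φ L lam Lam)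
    (u u' : ℝ → Ed d) (hu : MemW1Lphi T Φ u u') (hdist : distLinf T Φ u' < Lam) :
    IntegrableOn (fun t => L t (u t) (u' t)) (Icc (0:ℝ) T) ∧
      IntegrableOn (fun t => gradient (fun x' => L t x' (u' t)) (u t)) (Icc (0:ℝ) T) ∧
      IntegrableOn (fun t => conjFn Φ (lam⁻¹ • gradient (fun y' => L t (u t) y') (u' t)))
        (Icc (0:ℝ) T) := by
  classical
  set μ := volume.restrict (Icc (0:ℝ) T) with hμdef
  obtain ⟨hu'int, ⟨hu'aem, l₀, hl₀, hK⟩, hurep⟩ := hu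
  obtain ⟨a, b, ha_cont, ha_nn, hb_int, hb_nn, hS⟩ := hLS
  obtain ⟨hLmeas, hLcd⟩ := hLC
  have hΦnn := hΦ.2.2.1
  -- u is continuous on [0,T]
  have hucont : ContinuousOn u (Icc (0:ℝ) T) := by
    have h1 : ContinuousOn (fun x => u 0 + ∫ s in Ioc (0:ℝ) x, u' s) (Icc (0:ℝ) T) :=
      continuousOn_const.add (intervalIntegral.continuousOn_primitive hu'int)
    exact h1.congr fun t ht => by
      rw [hurep t ht, intervalIntegral.integral_of_le ht.1]
  have huaem : AEMeasurable u μ := hucont.aemeasurable measurableSet_Icc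
  -- modify L on a null set
  obtain ⟨N, hNsub, hNmeas, hNnull⟩ := exists_measurable_superset_of_null (ae_iff.mp hLcd)
  set L₂ : ℝ → Ed d × Ed d → ℝ := fun t p => if t ∈ N then 0 else L t p.1 p.2 with hL₂def
  have hNae : ∀ᵐ t ∂μ, t ∉ N :=
    ae_iff.mpr (measure_mono_null (fun t ht => not_not.mp ht) hNnull)
  have hL₂meas : ∀ p : Ed d × Ed d, Measurable fun t => L₂ t p := fun p =>
    Measurable.ite hNmeas measurable_const (hLmeas p.1 p.2)
  have hL₂cd : ∀ t, ContDiff ℝ 1 (L₂ t) := by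
    intro t
    by_cases ht : t ∈ N
    · have : L₂ t = fun _ => (0:ℝ) := by funext p; simp [hL₂def, ht]
      rw [this]; exact contDiff_const
    · have hgood : ContDiff ℝ 1 fun p : Ed d × Ed d => L t p.1 p.2 := by
        by_contra hbad
        exact ht (hNsub hbad)
      have : L₂ t = fun p : Ed d × Ed d => L t p.1 p.2 := by funext p; simp [hL₂def, ht]
      rw [this]; exact hgood
  have hL₂eq : ∀ t, t ∉ N → L₂ t = fun p : Ed d × Ed d => L t p.1 p.2 := by
    intro t ht; funext p; simp [hL₂def, ht]
  have hL₂diff_x : ∀ t (y : Ed d), Differentiable ℝ fun x' => L₂ t (x', y) := fun t y =>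
    ((hL₂cd t).differentiable one_ne_zero).comp (differentiable_id.prodMk (differentiable_const y))
  have hL₂diff_y : ∀ t (x : Ed d), Differentiable ℝ fun y' => L₂ t (x, y') := fun t x =>
    ((hL₂cd t).differentiable one_ne_zero).comp ((differentiable_const x).prodMk differentiable_id)
  -- joint measurability
  have hpair : AEMeasurable (fun t => ((u t, u' t), t)) μ :=
    (huaem.prodMk hu'aem).prodMk aemeasurable_id
  have hLunc : Measurable (Function.uncurry fun (p : Ed d × Ed d) (t : ℝ) => L₂ t p) :=
    measurable_uncurry_of_continuous_of_measurable (fun t => (hL₂cd t).continuous) hL₂meas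
  have hg1unc : Measurable (Function.uncurry fun (p : Ed d × Ed d) (t : ℝ) =>
      gradient (fun x' => L₂ t (x', p.2)) p.1) :=
    measurable_uncurry_of_continuous_of_measurable
      (fun t => continuous_grad_fst (hL₂cd t))
      (fun p => measurable_gradient_t (fun x => hL₂meas (x, p.2))
        (fun t => hL₂diff_x t p.2) p.1)
  have hg2unc : Measurable (Function.uncurry fun (p : Ed d × Ed d) (t : ℝ) =>
      gradient (fun y' => L₂ t (p.1, y')) p.2) :=
    measurable_uncurry_of_continuous_of_measurable
      (fun t => continuous_grad_snd (hL₂cd t))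
      (fun p => measurable_gradient_t (fun y => hL₂meas (p.1, y))
        (fun t => hL₂diff_y t p.1) p.2)
  have hf1 : AEStronglyMeasurable (fun t => L t (u t) (u' t)) μ := by
    have h0 : AEMeasurable (fun t => L₂ t (u t, u' t)) μ := hLunc.comp_aemeasurable hpair
    refine (h0.congr ?_).aestronglyMeasurable
    filter_upwards [hNae] with t ht
    simp [hL₂def, ht]
  have hf2 : AEStronglyMeasurable (fun t => gradient (fun x' => L t x' (u' t)) (u t)) μ := by
    have h0 : AEMeasurable (fun t => gradient (fun x' => L₂ t (x', u' t)) (u t)) μ :=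
      hg1unc.comp_aemeasurable hpair
    refine (h0.congr ?_).aestronglyMeasurable
    filter_upwards [hNae] with t ht
    have : (fun x' => L₂ t (x', u' t)) = fun x' => L t x' (u' t) := by
      funext x'; simp [hL₂def, ht]
    rw [this]
  have hg2aem : AEMeasurable (fun t => gradient (fun y' => L t (u t) y') (u' t)) μ := by
    have h0 : AEMeasurable (fun t => gradient (fun y' => L₂ t (u t, y')) (u' t)) μ :=
      hg2unc.comp_aemeasurable hpair
    refine h0.congr ?_
    filter_upwards [hNae] with t ht
    have : (fun y' => L₂ t (u t, y')) = fun y' => L t (u t) y' := by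
      funext y'; simp [hL₂def, ht]
    rw [this]
  have hf3 : AEStronglyMeasurable
      (fun t => conjFn Φ (lam⁻¹ • gradient (fun y' => L t (u t) y') (u' t))) μ := by
    have : AEMeasurable (fun t => lam⁻¹ • gradient (fun y' => L t (u t) y') (u' t)) μ :=
      hg2aem.const_smul lam⁻¹
    exact ((conj_continuous hΦ).measurable.comp_aemeasurable this).aestronglyMeasurable
  -- bound for a ∘ u
  obtain ⟨t₀, ht₀, hAmax⟩ := isCompact_Icc.exists_isMaxOn (nonempty_Icc.mpr hT.le)
    (ha_cont.comp_continuousOn hucont)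
  set A := a (u t₀) with hAdef
  have hA : ∀ t ∈ Icc (0:ℝ) T, a (u t) ≤ A := fun t ht => hAmax ht
  -- integrability of t ↦ Φ (Lam⁻¹ • u' t)
  rw [distLinf] at hdist
  have hlux_nonneg : ∀ f : ℝ → Ed d, 0 ≤ luxNorm T Φ f := fun f =>
    Real.sInf_nonneg fun x hx => hx.1.le
  have hS₁bdd : BddBelow {r : ℝ | ∃ v : ℝ → Ed d, Measurable v ∧ (∃ C : ℝ, ∀ t, ‖v t‖ ≤ C) ∧
      r = luxNorm T Φ (fun t => u' t - v t)} := by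
    refine ⟨0, ?_⟩
    rintro r ⟨v, _, _, rfl⟩
    exact hlux_nonneg _
  have hS₁ne : {r : ℝ | ∃ v : ℝ → Ed d, Measurable v ∧ (∃ C : ℝ, ∀ t, ‖v t‖ ≤ C) ∧
      r = luxNorm T Φ (fun t => u' t - v t)}.Nonempty :=
    ⟨luxNorm T Φ (fun t => u' t - (fun _ => (0:Ed d)) t),
      fun _ => 0, measurable_const, ⟨0, fun t => by simp⟩, rfl⟩
  obtain ⟨r, ⟨v, hvmeas, ⟨C, hvC⟩, rfl⟩, hrΛ⟩ := (csInf_lt_iff hS₁bdd hS₁ne).mp hdist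
  set w : ℝ → Ed d := fun t => u' t - v t with hwdef
  have hwaem : AEMeasurable w μ := hu'aem.sub hvmeas.aemeasurable
  have hC0 : 0 ≤ C := le_trans (norm_nonneg (v 0)) (hvC 0)
  set C₁ := max C 1 with hC₁def
  have hC₁ : 0 < C₁ := lt_of_lt_of_le one_pos (le_max_right C 1)
  obtain ⟨M₁, hM₁0, hM₁⟩ := Phi_bound_ball hΦ 1
  set Kr := (rhoE T Φ (fun t => l₀ • u' t)).toReal with hKrdef
  have hKr0 : 0 ≤ Kr := ENNReal.toReal_nonneg
  set l : ℝ := 2*C₁ + 2/l₀ + 2*Kr/l₀ + 2*C₁*M₁*T + 1 with hldef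
  have hlpos : 0 < l := by positivity
  have h2C₁ : 2*C₁ ≤ l := by
    rw [hldef]
    have h1 : 0 ≤ 2/l₀ := by positivity
    have h2 : 0 ≤ 2*Kr/l₀ := by positivity
    have h3 : 0 ≤ 2*C₁*M₁*T := by positivity
    linarith
  have h2l₀ : 2/l₀ ≤ l := by
    rw [hldef]
    have h1 : 0 ≤ 2*C₁ := by positivity
    have h2 : 0 ≤ 2*Kr/l₀ := by positivity
    have h3 : 0 ≤ 2*C₁*M₁*T := by positivity
    linarith
  have hKl : 2*Kr/l₀ ≤ l := by
    rw [hldef]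
    have h1 : 0 ≤ 2*C₁ := by positivity
    have h2 : 0 ≤ 2/l₀ := by positivity
    have h3 : 0 ≤ 2*C₁*M₁*T := by positivity
    linarith
  have hMl : 2*C₁*M₁*T ≤ l := by
    rw [hldef]
    have h1 : 0 ≤ 2*C₁ := by positivity
    have h2 : 0 ≤ 2/l₀ := by positivity
    have h3 : 0 ≤ 2*Kr/l₀ := by positivity
    linarith
  -- pointwise modular bound
  have hpt : ∀ t, Φ (l⁻¹ • w t) ≤ (1/(l*l₀)) * Φ (l₀ • u' t) + (C₁/l) * M₁ := by
    intro t
    have hdecomp : l⁻¹ • w t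
        = (1/2 : ℝ) • ((2/l) • u' t) + (1/2 : ℝ) • (-((2/l) • v t)) := by
      simp only [smul_smul, smul_neg]
      rw [show (1/2:ℝ)*(2/l) = l⁻¹ by field_simp]
      rw [← smul_neg, ← smul_add, ← sub_eq_add_neg]
    have hconv : Φ (l⁻¹ • w t)
        ≤ (1/2) * Φ ((2/l) • u' t) + (1/2) * Φ (-((2/l) • v t)) := by
      rw [hdecomp]
      exact hΦ.2.1.2 (mem_univ _) (mem_univ _) (by norm_num) (by norm_num) (by norm_num)
    have hterm1 : Φ ((2/l) • u' t) ≤ (2/(l*l₀)) * Φ (l₀ • u' t) := by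
      have heq : (2/l : ℝ) • u' t = (2/(l*l₀)) • (l₀ • u' t) := by
        rw [smul_smul]
        congr 1
        field_simp
      rw [heq]
      refine Phi_smul_le hΦ (by positivity) ?_ _
      rw [div_le_one (by positivity)]
      have h5 := mul_le_mul_of_nonneg_right h2l₀ hl₀.le
      rw [div_mul_cancel₀ (2:ℝ) hl₀.ne'] at h5
      linarith
    have hterm2 : Φ (-((2/l) • v t)) ≤ (2*C₁/l) * M₁ := by
      rw [hΦ.2.2.2.2.2.1]
      have heq : (2/l : ℝ) • v t = (2*C₁/l) • (C₁⁻¹ • v t) := by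
        rw [smul_smul]
        congr 1
        field_simp
      rw [heq]
      have hsc : Φ ((2*C₁/l) • (C₁⁻¹ • v t)) ≤ (2*C₁/l) * Φ (C₁⁻¹ • v t) := by
        refine Phi_smul_le hΦ (by positivity) ?_ _
        rw [div_le_one hlpos]
        exact h2C₁
      refine le_trans hsc ?_
      refine mul_le_mul_of_nonneg_left ?_ (by positivity)
      refine hM₁ _ ?_
      rw [norm_smul]
      have : ‖(C₁⁻¹ : ℝ)‖ = C₁⁻¹ := abs_of_pos (by positivity)
      rw [this]
      calc C₁⁻¹ * ‖v t‖ ≤ C₁⁻¹ * C₁ :=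
            mul_le_mul_of_nonneg_left (le_trans (hvC t) (le_max_left C 1)) (by positivity)
        _ = 1 := inv_mul_cancel₀ hC₁.ne'
    calc Φ (l⁻¹ • w t) ≤ (1/2) * Φ ((2/l) • u' t) + (1/2) * Φ (-((2/l) • v t)) := hconv
      _ ≤ (1/2) * ((2/(l*l₀)) * Φ (l₀ • u' t)) + (1/2) * ((2*C₁/l) * M₁) :=
          add_le_add (mul_le_mul_of_nonneg_left hterm1 (by norm_num))
            (mul_le_mul_of_nonneg_left hterm2 (by norm_num))
      _ = (1/(l*l₀)) * Φ (l₀ • u' t) + (C₁/l) * M₁ := by ring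
  -- modular bound for l
  have hρl : rhoE T Φ (fun t => l⁻¹ • w t) ≤ 1 := by
    have haem1 : AEMeasurable (fun t => ENNReal.ofReal (Φ (l₀ • u' t))) μ :=
      ENNReal.measurable_ofReal.comp_aemeasurable
        (hΦ.1.continuous.measurable.comp_aemeasurable (hu'aem.const_smul l₀))
    have hstep : rhoE T Φ (fun t => l⁻¹ • w t)
        ≤ ∫⁻ t, (ENNReal.ofReal (1/(l*l₀)) * ENNReal.ofReal (Φ (l₀ • u' t))
            + ENNReal.ofReal ((C₁/l) * M₁)) ∂μ := by
      refine lintegral_mono fun t => ?_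
      refine le_trans (ENNReal.ofReal_le_ofReal (hpt t)) ?_
      refine le_trans ENNReal.ofReal_add_le ?_
      rw [ENNReal.ofReal_mul (by positivity)]
    have hsplit : ∫⁻ t, (ENNReal.ofReal (1/(l*l₀)) * ENNReal.ofReal (Φ (l₀ • u' t))
          + ENNReal.ofReal ((C₁/l) * M₁)) ∂μ
        = ENNReal.ofReal (1/(l*l₀)) * rhoE T Φ (fun t => l₀ • u' t)
          + ENNReal.ofReal ((C₁/l) * M₁) * ENNReal.ofReal T := by
      rw [lintegral_add_right _ measurable_const]
      rw [lintegral_const_mul'' _ haem1]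
      rw [lintegral_const]
      congr 2
      rw [hμdef, Measure.restrict_apply_univ, Real.volume_Icc, sub_zero]
    have hbound1 : ENNReal.ofReal (1/(l*l₀)) * rhoE T Φ (fun t => l₀ • u' t)
        ≤ ENNReal.ofReal (1/2) := by
      have hKeq : rhoE T Φ (fun t => l₀ • u' t) = ENNReal.ofReal Kr :=
        (ENNReal.ofReal_toReal hK.ne).symm
      rw [hKeq, ← ENNReal.ofReal_mul (by positivity)]
      refine ENNReal.ofReal_le_ofReal ?_
      rw [div_mul_eq_mul_div, one_mul, div_le_div_iff₀ (by positivity) (by norm_num)]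
      have h5 := mul_le_mul_of_nonneg_right hKl hl₀.le
      rw [div_mul_cancel₀ (2*Kr) hl₀.ne'] at h5
      linarith
    have hbound2 : ENNReal.ofReal ((C₁/l) * M₁) * ENNReal.ofReal T
        ≤ ENNReal.ofReal (1/2) := by
      rw [← ENNReal.ofReal_mul (by positivity)]
      refine ENNReal.ofReal_le_ofReal ?_
      rw [div_mul_eq_mul_div, div_mul_eq_mul_div, div_le_div_iff₀ hlpos (by norm_num)]
      nlinarith
    calc rhoE T Φ (fun t => l⁻¹ • w t) ≤ _ := hstep
      _ = _ := hsplit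
      _ ≤ ENNReal.ofReal (1/2) + ENNReal.ofReal (1/2) := add_le_add hbound1 hbound2
      _ = 1 := by
          rw [← ENNReal.ofReal_add (by norm_num) (by norm_num)]
          norm_num
  -- extract l' < Lam
  have hlt : luxNorm T Φ w < Lam := hrΛ
  rw [luxNorm] at hlt
  obtain ⟨l', ⟨hl'pos, hρ'⟩, hl'Λ⟩ := (csInf_lt_iff
    (s := {l : ℝ | 0 < l ∧ rhoE T Φ (fun t => l⁻¹ • w t) ≤ 1})
    ⟨0, fun x hx => hx.1.le⟩ ⟨l, hlpos, hρl⟩).mp hlt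
  -- pointwise bound for Φ(Lam⁻¹ • u')
  set θ := l'/Lam with hθdef
  have hθpos : 0 < θ := by positivity
  have hθlt : θ < 1 := (div_lt_one hLam).mpr hl'Λ
  set c : ℝ := ((1-θ) * Lam)⁻¹ with hcdef
  have h1θ : 0 < 1 - θ := by linarith
  have hc0 : 0 ≤ c := by
    rw [hcdef]
    positivity
  obtain ⟨M₂, hM₂0, hM₂⟩ := Phi_bound_ball hΦ (c*C)
  have hpt2 : ∀ t, Φ (Lam⁻¹ • u' t) ≤ Φ (l'⁻¹ • w t) + M₂ := by
    intro t
    have hdec : Lam⁻¹ • u' t = θ • (l'⁻¹ • w t) + (1-θ) • (c • v t) := by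
      simp only [smul_smul]
      rw [show θ * l'⁻¹ = Lam⁻¹ by rw [hθdef]; field_simp]
      rw [show (1-θ) * c = Lam⁻¹ by rw [hcdef]; field_simp]
      rw [← smul_add, hwdef]
      simp
    have hΦv : Φ (c • v t) ≤ M₂ := by
      refine hM₂ _ ?_
      rw [norm_smul]
      rw [show ‖c‖ = c from abs_of_nonneg hc0]
      exact mul_le_mul_of_nonneg_left (hvC t) hc0
    have hconv2 : Φ (Lam⁻¹ • u' t) ≤ θ * Φ (l'⁻¹ • w t) + (1-θ) * Φ (c • v t) := by
      rw [hdec]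
      exact hΦ.2.1.2 (mem_univ _) (mem_univ _) hθpos.le h1θ.le (by ring)
    have hX := hΦnn (l'⁻¹ • w t)
    have hY := hΦnn (c • v t)
    nlinarith
  -- integrability of Φ(Lam⁻¹ • u')
  have hΦu'int : Integrable (fun t => Φ (Lam⁻¹ • u' t)) μ := by
    constructor
    · exact (hΦ.1.continuous.measurable.comp_aemeasurable
        (hu'aem.const_smul Lam⁻¹)).aestronglyMeasurable
    · rw [hasFiniteIntegral_iff_ofReal (Eventually.of_forall fun t => hΦnn _)]
      calc ∫⁻ t, ENNReal.ofReal (Φ (Lam⁻¹ • u' t)) ∂μ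
          ≤ ∫⁻ t, (ENNReal.ofReal (Φ (l'⁻¹ • w t)) + ENNReal.ofReal M₂) ∂μ :=
            lintegral_mono fun t =>
              le_trans (ENNReal.ofReal_le_ofReal (hpt2 t)) ENNReal.ofReal_add_le
        _ = rhoE T Φ (fun t => l'⁻¹ • w t) + ENNReal.ofReal M₂ * μ univ := by
            rw [lintegral_add_right _ measurable_const, lintegral_const]
            rfl
        _ ≤ 1 + ENNReal.ofReal M₂ * ENNReal.ofReal T := by
            refine add_le_add hρ' ?_
            rw [hμdef, Measure.restrict_apply_univ, Real.volume_Icc, sub_zero]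
        _ < ⊤ := by
            refine ENNReal.add_lt_top.mpr ⟨ENNReal.one_lt_top, ?_⟩
            exact ENNReal.mul_lt_top ENNReal.ofReal_lt_top ENNReal.ofReal_lt_top
  -- the dominating function
  have hbint : Integrable b μ := hb_int
  have hhint : Integrable (fun t => A * (b t + Φ (Lam⁻¹ • u' t))) μ :=
    (hbint.add hΦu'int).const_mul A
  have hkey : ∀ᵐ t ∂μ,
      |L t (u t) (u' t)| + ‖gradient (fun x' => L t x' (u' t)) (u t)‖ +
        conjFn Φ (lam⁻¹ • gradient (fun y' => L t (u t) y') (u' t))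
      ≤ A * (b t + Φ (Lam⁻¹ • u' t)) := by
    filter_upwards [hS, ae_restrict_mem measurableSet_Icc] with t hSt htmem
    calc _ ≤ a (u t) * (b t + Φ (Lam⁻¹ • u' t)) := hSt (u t) (u' t)
      _ ≤ A * (b t + Φ (Lam⁻¹ • u' t)) := by
          refine mul_le_mul_of_nonneg_right (hA t htmem) ?_
          have := hΦnn (Lam⁻¹ • u' t)
          have := hb_nn t
          linarith
  refine ⟨?_, ?_, ?_⟩
  · refine Integrable.mono' hhint hf1 ?_
    filter_upwards [hkey] with t ht
    have h1 := norm_nonneg (gradient (fun x' => L t x' (u' t)) (u t))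
    have h2 := conj_nonneg hΦ (lam⁻¹ • gradient (fun y' => L t (u t) y') (u' t))
    rw [Real.norm_eq_abs]
    linarith
  · refine Integrable.mono' hhint hf2 ?_
    filter_upwards [hkey] with t ht
    have h1 := abs_nonneg (L t (u t) (u' t))
    have h2 := conj_nonneg hΦ (lam⁻¹ • gradient (fun y' => L t (u t) y') (u' t))
    linarith
  · refine Integrable.mono' hhint hf3 ?_
    filter_upwards [hkey] with t ht
    have h1 := abs_nonneg (L t (u t) (u' t))
    have h2 := norm_nonneg (gradient (fun x' => L t x' (u' t)) (u t))
    have h3 := conj_nonneg hΦ (lam⁻¹ • gradient (fun y' => L t (u t) y') (u' t))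
    rw [Real.norm_eq_abs, abs_of_nonneg h3]
    linarith
end
end

section
/- Let Φ : ℝ^d → [0,∞) be an N_∞ function and let L : [0,T]×ℝ^d×ℝ^d → ℝ be measurable in t for each (x,y), continuously differentiable in (x,y) for a.e. t, and satisfy the structure condition (S) with constants λ, Λ > 0. Then the action integral I(u) = ∫_0^T L(t,u(t),u'(t)) dt is Gâteaux differentiable at every u ∈ W^1L^Φ([0,T],ℝ^d) with d(u', L^∞) < Λ: for every v ∈ W^1L^Φ the map s ↦ I(u + sv) is finite for |s| small and differentiable at s = 0, with derivative ∫_0^T [∇_xL(t,u(t),u'(t))·v(t) + ∇_yL(t,u(t),u'(t))·v'(t)] dt, and this expression defines a bounded linear functional of v on W^1L^Φ. -/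
open MeasureTheory Filter Set
open scoped ENNReal RealInnerProductSpace Topology

noncomputable section

variable {d : ℕ}

namespace St14

lemma nInf_superlinear {Φ : Ed d → ℝ} (hΦ : IsNInf Φ) (C : ℝ) :
    ∃ R : ℝ, ∀ y : Ed d, R ≤ ‖y‖ → C * ‖y‖ ≤ Φ y := by
  have h := (hΦ.2.2.2.2.2.2).eventually (eventually_ge_atTop C)
  rw [eventually_comap] at h
  rcases eventually_atTop.1 h with ⟨R, hR⟩
  refine ⟨max R 1, fun y hy => ?_⟩
  have h1 : (0:ℝ) < ‖y‖ := lt_of_lt_of_le one_pos ((le_max_right R 1).trans hy)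
  have h2 : C ≤ Φ y / ‖y‖ := hR ‖y‖ ((le_max_left R 1).trans hy) y rfl
  calc C * ‖y‖ ≤ (Φ y / ‖y‖) * ‖y‖ := by gcongr
    _ = Φ y := div_mul_cancel₀ _ h1.ne'

lemma conjFn_bddAbove {Φ : Ed d → ℝ} (hΦ : IsNInf Φ) (z : Ed d) :
    BddAbove (Set.range fun y : Ed d => ⟪y, z⟫ - Φ y) := by
  obtain ⟨R, hR⟩ := nInf_superlinear hΦ (‖z‖ + 1)
  refine ⟨max R 0 * ‖z‖, ?_⟩
  rintro x ⟨y, rfl⟩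
  show ⟪y, z⟫ - Φ y ≤ max R 0 * ‖z‖
  by_cases hy : ‖y‖ ≤ max R 0
  · have h1 : ⟪y, z⟫ ≤ ‖y‖ * ‖z‖ := real_inner_le_norm y z
    have h2 : 0 ≤ Φ y := hΦ.2.2.1 y
    have h4 : ‖y‖ * ‖z‖ ≤ max R 0 * ‖z‖ := mul_le_mul_of_nonneg_right hy (norm_nonneg z)
    linarith
  · push_neg at hy
    have h2 := hR y ((le_max_left R 0).trans hy.le)
    have h1 : ⟪y, z⟫ ≤ ‖y‖ * ‖z‖ := real_inner_le_norm y z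
    have h3 : (0:ℝ) ≤ max R 0 * ‖z‖ := mul_nonneg (le_max_right R 0) (norm_nonneg z)
    nlinarith [norm_nonneg y, norm_nonneg z]

lemma young {Φ : Ed d → ℝ} (hΦ : IsNInf Φ) (y z : Ed d) :
    ⟪y, z⟫ ≤ Φ y + conjFn Φ z := by
  have := le_ciSup (conjFn_bddAbove hΦ z) y
  unfold conjFn
  linarith

lemma conjFn_nonneg {Φ : Ed d → ℝ} (hΦ : IsNInf Φ) (z : Ed d) : 0 ≤ conjFn Φ z := by
  have := young hΦ 0 z
  simpa [hΦ.2.2.2.1] using this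

lemma conjFn_unit_bound {Φ : Ed d → ℝ} (hΦ : IsNInf Φ) :
    ∃ M : ℝ, 0 ≤ M ∧ ∀ z : Ed d, ‖z‖ ≤ 1 → conjFn Φ z ≤ M := by
  obtain ⟨R, hR⟩ := nInf_superlinear hΦ 1
  refine ⟨max R 0, le_max_right R 0, fun z hz => ?_⟩
  refine ciSup_le fun y => ?_
  have h1 : ⟪y, z⟫ ≤ ‖y‖ * ‖z‖ := real_inner_le_norm y z
  by_cases hy : ‖y‖ ≤ max R 0
  · have h2 : 0 ≤ Φ y := hΦ.2.2.1 y
    have h4 : ‖y‖ * ‖z‖ ≤ ‖y‖ * 1 := mul_le_mul_of_nonneg_left hz (norm_nonneg y)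
    have h5 : ‖y‖ ≤ max R 0 := hy
    linarith
  · push_neg at hy
    have h2 := hR y ((le_max_left R 0).trans hy.le)
    have h4 : ‖y‖ * ‖z‖ ≤ ‖y‖ * 1 := mul_le_mul_of_nonneg_left hz (norm_nonneg y)
    have h5 : (0:ℝ) ≤ max R 0 := le_max_right R 0
    linarith

lemma norm_le_phi_add {Φ : Ed d → ℝ} (hΦ : IsNInf Φ) {M : ℝ}
    (hM : ∀ z : Ed d, ‖z‖ ≤ 1 → conjFn Φ z ≤ M) (hM0 : 0 ≤ M) (w : Ed d) :
    ‖w‖ ≤ Φ w + M := by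
  rcases eq_or_ne w 0 with rfl | hw
  · simpa [hΦ.2.2.2.1] using hM0
  · have hnorm : (0:ℝ) < ‖w‖ := norm_pos_iff.2 hw
    have h1 : ⟪w, ‖w‖⁻¹ • w⟫ = ‖w‖ := by
      rw [real_inner_smul_right, real_inner_self_eq_norm_sq]
      field_simp
    have h2 := young hΦ w (‖w‖⁻¹ • w)
    have h3 : conjFn Φ (‖w‖⁻¹ • w) ≤ M := by
      refine hM _ ?_
      rw [norm_smul, norm_inv, norm_norm]
      field_simp
      exact le_rfl
    linarith [h1 ▸ h2]

lemma phi_smul_le {Φ : Ed d → ℝ} (hΦ : IsNInf Φ) {c : ℝ} (hc0 : 0 ≤ c) (hc1 : c ≤ 1)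
    (y : Ed d) : Φ (c • y) ≤ c * Φ y := by
  have := hΦ.2.1.2 (mem_univ y) (mem_univ (0 : Ed d)) hc0 (by linarith : (0:ℝ) ≤ 1 - c)
    (by ring)
  simpa [hΦ.2.2.2.1] using this

lemma phi_smul_abs_le {Φ : Ed d → ℝ} (hΦ : IsNInf Φ) {s ε : ℝ} (hε : 0 < ε) (hs : |s| ≤ ε)
    (y : Ed d) : Φ (s • y) ≤ Φ (ε • y) := by
  set θ : ℝ := (s + ε) / (2 * ε) with hθ
  have hθ0 : 0 ≤ θ := by
    apply div_nonneg _ (by linarith)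
    have := abs_le.1 hs
    linarith [this.1]
  have hθ1 : θ ≤ 1 := by
    rw [div_le_one (by linarith)]
    have := abs_le.1 hs
    linarith [this.2]
  have hid : s • y = θ • (ε • y) + (1 - θ) • (-(ε • y)) := by
    rw [smul_neg, smul_smul, smul_smul, ← sub_eq_add_neg, ← sub_smul]
    congr 1
    have hθe : θ * (2 * ε) = s + ε := by rw [hθ]; exact div_mul_cancel₀ _ (by positivity)
    linear_combination -hθe
  calc Φ (s • y) = Φ (θ • (ε • y) + (1 - θ) • (-(ε • y))) := by rw [hid]
    _ ≤ θ * Φ (ε • y) + (1 - θ) * Φ (-(ε • y)) :=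
        hΦ.2.1.2 (mem_univ _) (mem_univ _) hθ0 (by linarith) (by ring)
    _ = Φ (ε • y) := by rw [hΦ.2.2.2.2.2.1]; ring

lemma convex2 {Φ : Ed d → ℝ} (hΦ : IsNInf Φ) {α : ℝ} (hα0 : 0 ≤ α) (hα1 : α ≤ 1)
    (x y : Ed d) : Φ (α • x + (1 - α) • y) ≤ α * Φ x + (1 - α) * Φ y :=
  hΦ.2.1.2 (mem_univ x) (mem_univ y) hα0 (by linarith) (by ring)

lemma convex3 {Φ : Ed d → ℝ} (hΦ : IsNInf Φ) {α β : ℝ} (hα : 0 ≤ α) (hβ : 0 < β)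
    (hsum : α + 2 * β = 1) (x y z : Ed d) :
    Φ (α • x + β • y + β • z) ≤ α * Φ x + β * Φ y + β * Φ z := by
  have hα1 : α ≤ 1 := by linarith
  have hm : α • x + β • y + β • z = α • x + (1 - α) • ((1/2 : ℝ) • y + (1/2 : ℝ) • z) := by
    rw [smul_add, smul_smul, smul_smul]
    have h : (1 - α) * (1/2 : ℝ) = β := by linarith
    rw [h, add_assoc]
  rw [hm]
  have h2 : Φ ((1/2 : ℝ) • y + (1/2 : ℝ) • z) ≤ (1/2) * Φ y + (1/2) * Φ z :=
    hΦ.2.1.2 (mem_univ y) (mem_univ z) (by norm_num) (by norm_num) (by norm_num)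
  have h1 : Φ (α • x + (1 - α) • ((1/2 : ℝ) • y + (1/2 : ℝ) • z)) ≤
      α * Φ x + (1 - α) * Φ ((1/2 : ℝ) • y + (1/2 : ℝ) • z) :=
    hΦ.2.1.2 (mem_univ _) (mem_univ _) hα (by linarith) (by ring)
  have h1a : (0:ℝ) ≤ 1 - α := by linarith
  have h3 : (1 - α) = 2 * β := by linarith
  have h4 := mul_le_mul_of_nonneg_left h2 h1a
  have h5 : (1-α)*(1/2*Φ y + 1/2*Φ z) = β*Φ y + β*Φ z := by rw [h3]; ring
  linarith [h1, h4, h5]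

open Metric in
lemma bound_on_ball {f : Ed d → ℝ} (hf : Continuous f) (r : ℝ) :
    ∃ K : ℝ, 0 ≤ K ∧ ∀ x : Ed d, ‖x‖ ≤ r → f x ≤ K := by
  obtain ⟨K, hK⟩ := (isCompact_closedBall (0 : Ed d) r).bddAbove_image hf.continuousOn
  refine ⟨max K 0, le_max_right K 0, fun x hx => ?_⟩
  have : f x ∈ f '' closedBall 0 r := ⟨x, by simpa [mem_closedBall_zero_iff] using hx, rfl⟩
  exact (hK this).trans (le_max_left K 0)
lemma integrableOn_phi_comp {T : ℝ} {Φ : Ed d → ℝ} (hΦ : IsNInf Φ) {g : ℝ → Ed d}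
    (hg : AEMeasurable g (volume.restrict (Icc (0:ℝ) T)))
    (hfin : rhoE T Φ g < ⊤) :
    IntegrableOn (fun t => Φ (g t)) (Icc (0:ℝ) T) := by
  constructor
  · exact (hΦ.1.continuous.measurable.comp_aemeasurable hg).aestronglyMeasurable
  · rw [hasFiniteIntegral_iff_ofReal (Eventually.of_forall fun t => hΦ.2.2.1 _)]
    exact hfin

lemma integral_phi_le_one {T : ℝ} {Φ : Ed d → ℝ} (hΦ : IsNInf Φ) {g : ℝ → Ed d}
    (hg : AEMeasurable g (volume.restrict (Icc (0:ℝ) T)))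
    (h1 : rhoE T Φ g ≤ 1) :
    ∫ t in Icc (0:ℝ) T, Φ (g t) ≤ 1 := by
  rw [integral_eq_lintegral_of_nonneg_ae (Eventually.of_forall fun t => hΦ.2.2.1 _)
      (hΦ.1.continuous.measurable.comp_aemeasurable hg).aestronglyMeasurable]
  calc (∫⁻ t in Icc (0:ℝ) T, ENNReal.ofReal (Φ (g t))).toReal
      ≤ (1 : ℝ≥0∞).toReal := ENNReal.toReal_mono ENNReal.one_ne_top h1
    _ = 1 := by simp

lemma rhoE_smul_le {T : ℝ} {Φ : Ed d → ℝ} (hΦ : IsNInf Φ) {c : ℝ} (h0 : 0 ≤ c) (h1 : c ≤ 1)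
    (g : ℝ → Ed d) :
    rhoE T Φ (fun t => c • g t) ≤ ENNReal.ofReal c * rhoE T Φ g := by
  rw [rhoE, rhoE, ← lintegral_const_mul' _ _ ENNReal.ofReal_ne_top]
  refine lintegral_mono fun t => ?_
  rw [← ENNReal.ofReal_mul h0]
  exact ENNReal.ofReal_le_ofReal (phi_smul_le hΦ h0 h1 _)

lemma exists_lux_of_rho_finite {T : ℝ} {Φ : Ed d → ℝ} (hΦ : IsNInf Φ) {g : ℝ → Ed d} {l : ℝ}
    (hl : 0 < l) (hfin : rhoE T Φ (fun t => l • g t) < ⊤) :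
    ∃ k : ℝ, 0 < k ∧ rhoE T Φ (fun t => k⁻¹ • g t) ≤ 1 := by
  set r := (rhoE T Φ (fun t => l • g t)).toReal with hrdef
  have hr : 0 ≤ r := ENNReal.toReal_nonneg
  refine ⟨l⁻¹ * (1 + r), by positivity, ?_⟩
  have hkey : (fun t => (l⁻¹ * (1 + r))⁻¹ • g t) = fun t => (1 + r)⁻¹ • (l • g t) := by
    funext t
    rw [smul_smul]
    congr 1
    field_simp
  rw [hkey]
  calc rhoE T Φ (fun t => (1 + r)⁻¹ • (l • g t))
      ≤ ENNReal.ofReal ((1 + r)⁻¹) * rhoE T Φ (fun t => l • g t) :=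
        rhoE_smul_le hΦ (by positivity) (by rw [inv_le_one_iff₀]; right; linarith) _
    _ = ENNReal.ofReal ((1 + r)⁻¹) * ENNReal.ofReal r := by
        rw [hrdef, ENNReal.ofReal_toReal hfin.ne]
    _ = ENNReal.ofReal ((1 + r)⁻¹ * r) := by
        rw [ENNReal.ofReal_mul (by positivity)]
    _ ≤ 1 := by
        rw [ENNReal.ofReal_le_one]
        rw [inv_mul_le_iff₀ (by positivity)]
        linarith

lemma exists_lux_of_bounded {T : ℝ} {Φ : Ed d → ℝ} (hΦ : IsNInf Φ) (hT : 0 ≤ T)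
    {g : ℝ → Ed d} {M : ℝ} (hM : ∀ t ∈ Icc (0:ℝ) T, ‖g t‖ ≤ M) :
    ∃ k : ℝ, 0 < k ∧ rhoE T Φ (fun t => k⁻¹ • g t) ≤ 1 := by
  obtain ⟨K₁, hK₁0, hK₁⟩ := bound_on_ball hΦ.1.continuous (1 : ℝ)
  set M' := max M 1 with hM'def
  have hM'1 : (1:ℝ) ≤ M' := le_max_right M 1
  have hM'0 : (0:ℝ) < M' := lt_of_lt_of_le one_pos hM'1
  set k := M' * (1 + K₁ * T) with hkdef
  have hk0 : 0 < k := by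
    have : (0:ℝ) < 1 + K₁ * T := by positivity
    positivity
  have hkM' : M' ≤ k := by
    rw [hkdef]
    nlinarith [mul_nonneg hK₁0 hT]
  refine ⟨k, hk0, ?_⟩
  have hptwise : ∀ t ∈ Icc (0:ℝ) T, Φ (k⁻¹ • g t) ≤ (M' / k) * K₁ := by
    intro t ht
    have hsmul : k⁻¹ • g t = (M' / k) • (M'⁻¹ • g t) := by
      rw [smul_smul]
      congr 1
      field_simp
    rw [hsmul]
    have hb : ‖M'⁻¹ • g t‖ ≤ 1 := by
      rw [norm_smul, norm_inv, Real.norm_eq_abs, abs_of_pos hM'0]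
      rw [inv_mul_le_iff₀ hM'0, mul_one]
      exact (hM t ht).trans (le_max_left M 1)
    calc Φ ((M' / k) • (M'⁻¹ • g t)) ≤ (M' / k) * Φ (M'⁻¹ • g t) :=
          phi_smul_le hΦ (by positivity) (by rw [div_le_one hk0]; exact hkM') _
      _ ≤ (M' / k) * K₁ := by
          have := hK₁ _ hb
          have h2 : (0:ℝ) ≤ M' / k := by positivity
          nlinarith
  have hae : ∀ᵐ t ∂(volume.restrict (Icc (0:ℝ) T)),
      ENNReal.ofReal (Φ (k⁻¹ • g t)) ≤ ENNReal.ofReal ((M' / k) * K₁) := by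
    rw [ae_restrict_iff' measurableSet_Icc]
    exact Eventually.of_forall fun t ht => ENNReal.ofReal_le_ofReal (hptwise t ht)
  calc rhoE T Φ (fun t => k⁻¹ • g t)
      ≤ ∫⁻ _ in Icc (0:ℝ) T, ENNReal.ofReal ((M' / k) * K₁) := lintegral_mono_ae hae
    _ = ENNReal.ofReal ((M' / k) * K₁) * volume (Icc (0:ℝ) T) := by
        rw [lintegral_const, Measure.restrict_apply_univ]
    _ = ENNReal.ofReal ((M' / k) * K₁) * ENNReal.ofReal T := by
        rw [Real.volume_Icc, sub_zero]
    _ = ENNReal.ofReal ((M' / k) * K₁ * T) := by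
        exact (ENNReal.ofReal_mul (by positivity)).symm
    _ ≤ 1 := by
        rw [ENNReal.ofReal_le_one]
        have hc : (0:ℝ) ≤ K₁ * T := mul_nonneg hK₁0 hT
        have h1 : M' / k * K₁ * T = (K₁ * T) / (1 + K₁ * T) := by
          rw [hkdef]
          field_simp
        rw [h1, div_le_one (by linarith)]
        linarith

lemma integral_norm_le_lux {T : ℝ} {Φ : Ed d → ℝ} (hΦ : IsNInf Φ) (hT : 0 ≤ T) {M₂ : ℝ}
    (hM₂0 : 0 ≤ M₂) (hM₂ : ∀ z : Ed d, ‖z‖ ≤ 1 → conjFn Φ z ≤ M₂)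
    {g : ℝ → Ed d} (hint : IntegrableOn g (Icc (0:ℝ) T))
    {k : ℝ} (hk : 0 < k) (hρ : rhoE T Φ (fun t => k⁻¹ • g t) ≤ 1) :
    ∫ t in Icc (0:ℝ) T, ‖g t‖ ≤ k * (1 + T * M₂) := by
  have hgm : AEMeasurable (fun t => k⁻¹ • g t) (volume.restrict (Icc (0:ℝ) T)) :=
    hint.aemeasurable.const_smul k⁻¹
  have hphiint : IntegrableOn (fun t => Φ (k⁻¹ • g t)) (Icc (0:ℝ) T) :=
    integrableOn_phi_comp hΦ hgm (lt_of_le_of_lt hρ ENNReal.one_lt_top)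
  have hconst : IntegrableOn (fun _ : ℝ => M₂) (Icc (0:ℝ) T) := by
    exact integrableOn_const (by rw [Real.volume_Icc]; exact ENNReal.ofReal_ne_top)
  have hpt : ∀ t, ‖g t‖ ≤ k * (Φ (k⁻¹ • g t) + M₂) := by
    intro t
    have h1 : ‖k⁻¹ • g t‖ ≤ Φ (k⁻¹ • g t) + M₂ := norm_le_phi_add hΦ hM₂ hM₂0 _
    have h2 : ‖g t‖ = k * ‖k⁻¹ • g t‖ := by
      rw [norm_smul, norm_inv, Real.norm_eq_abs, abs_of_pos hk]
      field_simp
    rw [h2]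
    nlinarith [norm_nonneg (k⁻¹ • g t)]
  have hTvol : (volume (Icc (0:ℝ) T)).toReal = T := by
    rw [Real.volume_Icc, sub_zero, ENNReal.toReal_ofReal hT]
  calc ∫ t in Icc (0:ℝ) T, ‖g t‖
      ≤ ∫ t in Icc (0:ℝ) T, k * (Φ (k⁻¹ • g t) + M₂) := by
        refine integral_mono hint.norm ?_ hpt
        exact ((hphiint.add hconst).const_mul k)
    _ = k * ((∫ t in Icc (0:ℝ) T, Φ (k⁻¹ • g t)) + T * M₂) := by
        rw [integral_const_mul, integral_add hphiint hconst, setIntegral_const, measureReal_def, hTvol,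
          smul_eq_mul]
    _ ≤ k * (1 + T * M₂) := by
        have := integral_phi_le_one hΦ hgm hρ
        nlinarith

lemma norm_le_of_rep {T : ℝ} {v v' : ℝ → Ed d}
    (hint : IntegrableOn v' (Icc (0:ℝ) T))
    (hrep : ∀ t ∈ Icc (0:ℝ) T, v t = v 0 + ∫ s in (0:ℝ)..t, v' s) :
    ∀ t ∈ Icc (0:ℝ) T, ‖v t‖ ≤ ‖v 0‖ + ∫ s in Icc (0:ℝ) T, ‖v' s‖ := by
  intro t ht
  rw [hrep t ht]
  refine (norm_add_le _ _).trans ?_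
  gcongr
  refine (intervalIntegral.norm_integral_le_integral_norm_uIoc).trans ?_
  have hsub : uIoc (0:ℝ) t ⊆ Icc (0:ℝ) T := by
    rw [uIoc_of_le ht.1]
    exact Ioc_subset_Icc_self.trans (Icc_subset_Icc le_rfl ht.2)
  refine setIntegral_mono_set hint.norm ?_ hsub.eventuallyLE
  exact Eventually.of_forall fun s => norm_nonneg _

lemma integrableOn_of_rep {T : ℝ} (hT : 0 ≤ T) {v v' : ℝ → Ed d}
    (hint : IntegrableOn v' (Icc (0:ℝ) T))
    (hrep : ∀ t ∈ Icc (0:ℝ) T, v t = v 0 + ∫ s in (0:ℝ)..t, v' s) :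
    IntegrableOn v (Icc (0:ℝ) T) ∧ AEMeasurable v (volume.restrict (Icc (0:ℝ) T)) := by
  have hbar : ContinuousOn (fun t => v 0 + ∫ s in (0:ℝ)..t, v' s) (Icc (0:ℝ) T) := by
    refine continuousOn_const.add ?_
    have h1 : IntegrableOn v' (uIcc (0:ℝ) T) := by rwa [uIcc_of_le hT]
    have := intervalIntegral.continuousOn_primitive_interval h1
    rwa [uIcc_of_le hT] at this
  have hbint : IntegrableOn (fun t => v 0 + ∫ s in (0:ℝ)..t, v' s) (Icc (0:ℝ) T) :=
    hbar.integrableOn_Icc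
  have heq : (fun t => v 0 + ∫ s in (0:ℝ)..t, v' s) =ᵐ[volume.restrict (Icc (0:ℝ) T)] v := by
    rw [Filter.EventuallyEq, ae_restrict_iff' measurableSet_Icc]
    exact Eventually.of_forall fun t ht => (hrep t ht).symm
  exact ⟨hbint.congr heq, (hbint.congr heq).aemeasurable⟩

lemma norm_le_emb {T : ℝ} (hT : 0 < T) {v v' : ℝ → Ed d}
    (hint : IntegrableOn v' (Icc (0:ℝ) T)) (hvint : IntegrableOn v (Icc (0:ℝ) T))
    (hrep : ∀ t ∈ Icc (0:ℝ) T, v t = v 0 + ∫ s in (0:ℝ)..t, v' s) :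
    ∀ t ∈ Icc (0:ℝ) T, ‖v t‖ ≤
      T⁻¹ * (∫ r in Icc (0:ℝ) T, ‖v r‖) + ∫ r in Icc (0:ℝ) T, ‖v' r‖ := by
  intro t ht
  set B := ∫ r in Icc (0:ℝ) T, ‖v' r‖ with hBdef
  have hB0 : 0 ≤ B := setIntegral_nonneg measurableSet_Icc fun r _ => norm_nonneg _
  have hii : ∀ a ∈ Icc (0:ℝ) T, ∀ b ∈ Icc (0:ℝ) T, IntervalIntegrable v' volume a b := by
    intro a ha b hb
    rw [intervalIntegrable_iff]
    exact hint.mono_set (uIoc_subset_uIcc.trans (uIcc_subset_Icc ha hb))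
  have key : ∀ r ∈ Icc (0:ℝ) T, ‖v t‖ ≤ ‖v r‖ + B := by
    intro r hr
    have h0T : (0:ℝ) ∈ Icc (0:ℝ) T := ⟨le_refl 0, hT.le⟩
    have hadj := intervalIntegral.integral_add_adjacent_intervals
      (hii 0 h0T r hr) (hii r hr t ht)
    have hvt : v t = v r + ∫ s in r..t, v' s := by
      rw [hrep t ht, hrep r hr, ← hadj, ← add_assoc]
    rw [hvt]
    refine (norm_add_le _ _).trans ?_
    gcongr
    refine (intervalIntegral.norm_integral_le_integral_norm_uIoc).trans ?_
    have hsub : uIoc r t ⊆ Icc (0:ℝ) T := uIoc_subset_uIcc.trans (uIcc_subset_Icc hr ht)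
    exact setIntegral_mono_set hint.norm (Eventually.of_forall fun s => norm_nonneg _)
      hsub.eventuallyLE
  have hTvol : (volume (Icc (0:ℝ) T)).toReal = T := by
    rw [Real.volume_Icc, sub_zero, ENNReal.toReal_ofReal hT.le]
  have hconstint : IntegrableOn (fun _ : ℝ => B) (Icc (0:ℝ) T) := by
    exact integrableOn_const (by rw [Real.volume_Icc]; exact ENNReal.ofReal_ne_top)
  have hconstint2 : IntegrableOn (fun _ : ℝ => ‖v t‖) (Icc (0:ℝ) T) := by
    exact integrableOn_const (by rw [Real.volume_Icc]; exact ENNReal.ofReal_ne_top)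
  have hsum : IntegrableOn (fun r => ‖v r‖ + B) (Icc (0:ℝ) T) := by
    exact hvint.norm.add hconstint
  have h2 : T * ‖v t‖ ≤ (∫ r in Icc (0:ℝ) T, ‖v r‖) + T * B := by
    have hm := setIntegral_mono_on hconstint2 hsum measurableSet_Icc key
    rw [setIntegral_const, measureReal_def, hTvol, smul_eq_mul] at hm
    rwa [integral_add hvint.norm hconstint, setIntegral_const, measureReal_def, hTvol, smul_eq_mul] at hm
  calc ‖v t‖ = T⁻¹ * (T * ‖v t‖) := by field_simp
    _ ≤ T⁻¹ * ((∫ r in Icc (0:ℝ) T, ‖v r‖) + T * B) := by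
        exact mul_le_mul_of_nonneg_left h2 (inv_nonneg.2 hT.le)
    _ = T⁻¹ * (∫ r in Icc (0:ℝ) T, ‖v r‖) + B := by field_simp

lemma slope_seq {φ : ℝ → ℝ} {c : ℝ} (h : HasDerivAt φ c 0) :
    Tendsto (fun n : ℕ => (φ (((n:ℝ)+1)⁻¹) - φ 0) * ((n:ℝ)+1)) atTop (𝓝 c) := by
  have hs := hasDerivAt_iff_tendsto_slope.1 h
  have hseq : Tendsto (fun n : ℕ => ((n:ℝ)+1)⁻¹) atTop (𝓝[≠] (0:ℝ)) := by
    apply tendsto_nhdsWithin_of_tendsto_nhds_of_eventually_within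
    · have h0 := tendsto_one_div_add_atTop_nhds_zero_nat (𝕜 := ℝ)
      simpa [one_div] using h0
    · refine Eventually.of_forall fun n => ?_
      simp only [mem_compl_iff, mem_singleton_iff]
      positivity
  have hc := hs.comp hseq
  refine hc.congr fun n => ?_
  show slope φ 0 (((n:ℝ)+1)⁻¹) = _
  rw [slope_def_field]
  rw [sub_zero, div_eq_mul_inv, inv_inv]

lemma chain_rule {f : Ed d × Ed d → ℝ} (hf : ContDiff ℝ 1 f) (x y vx vy : Ed d) (s : ℝ) :
    HasDerivAt (fun r : ℝ => f (x + r • vx, y + r • vy))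
      (⟪gradient (fun x' => f (x', y + s • vy)) (x + s • vx), vx⟫ +
        ⟪gradient (fun y' => f (x + s • vx, y')) (y + s • vy), vy⟫) s := by
  have hdiff : Differentiable ℝ f := hf.differentiable one_ne_zero
  have hD : HasFDerivAt f (fderiv ℝ f (x + s • vx, y + s • vy)) (x + s • vx, y + s • vy) :=
    (hdiff _).hasFDerivAt
  have h1 : HasDerivAt (fun r : ℝ => x + r • vx) vx s := by
    simpa using ((hasDerivAt_id s).smul_const vx).const_add x
  have h2 : HasDerivAt (fun r : ℝ => y + r • vy) vy s := by
    simpa using ((hasDerivAt_id s).smul_const vy).const_add y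
  have hφ : HasDerivAt (fun r : ℝ => ((x + r • vx, y + r • vy) : Ed d × Ed d)) (vx, vy) s :=
    h1.prodMk h2
  have hcomp := hD.comp_hasDerivAt s hφ
  have hx0 := HasFDerivAt.comp (x + s • vx) hD
    (hasFDerivAt_prodMk_left (𝕜 := ℝ) (x + s • vx) (y + s • vy))
  have hx : HasFDerivAt (fun x' => f (x', y + s • vy))
      ((fderiv ℝ f (x + s • vx, y + s • vy)).comp
        (ContinuousLinearMap.inl ℝ (Ed d) (Ed d))) (x + s • vx) := hx0
  have hy0 := HasFDerivAt.comp (y + s • vy) hD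
    (hasFDerivAt_prodMk_right (𝕜 := ℝ) (x + s • vx) (y + s • vy))
  have hy : HasFDerivAt (fun y' => f (x + s • vx, y'))
      ((fderiv ℝ f (x + s • vx, y + s • vy)).comp
        (ContinuousLinearMap.inr ℝ (Ed d) (Ed d))) (y + s • vy) := hy0
  have hgx : ⟪gradient (fun x' => f (x', y + s • vy)) (x + s • vx), vx⟫ =
      fderiv ℝ f (x + s • vx, y + s • vy) (vx, 0) := by
    simp only [gradient]
    rw [InnerProductSpace.toDual_symm_apply, hx.fderiv]
    simp
  have hgy : ⟪gradient (fun y' => f (x + s • vx, y')) (y + s • vy), vy⟫ =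
      fderiv ℝ f (x + s • vx, y + s • vy) (0, vy) := by
    simp only [gradient]
    rw [InnerProductSpace.toDual_symm_apply, hy.fderiv]
    simp
  refine hcomp.congr_deriv ?_
  rw [hgx, hgy, ← map_add]
  congr 1
  simp

lemma exists_tilde {T : ℝ} {L : ℝ → Ed d → Ed d → ℝ} (hLC : CaraL T L) :
    ∃ Lt : ℝ → Ed d × Ed d → ℝ,
      Measurable (fun q : (Ed d × Ed d) × ℝ => Lt q.2 q.1) ∧
      (∀ᵐ t ∂(volume.restrict (Icc (0:ℝ) T)),
        (∀ p : Ed d × Ed d, Lt t p = L t p.1 p.2) ∧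
        ContDiff ℝ 1 fun p : Ed d × Ed d => L t p.1 p.2) := by
  obtain ⟨hmeas, hae⟩ := hLC
  set μr := volume.restrict (Icc (0:ℝ) T) with hμr
  set N := toMeasurable μr {t | ¬ ContDiff ℝ 1 fun p : Ed d × Ed d => L t p.1 p.2} with hN
  have hNmeas : MeasurableSet N := measurableSet_toMeasurable _ _
  have hNnull : μr N = 0 := by
    rw [hN, measure_toMeasurable]
    rw [ae_iff] at hae
    exact hae
  refine ⟨fun t p => (Nᶜ).indicator (fun s => L s p.1 p.2) t, ?_, ?_⟩
  · have hu_cont : ∀ t : ℝ, Continuous fun p : Ed d × Ed d =>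
        (Nᶜ).indicator (fun s => L s p.1 p.2) t := by
      intro t
      by_cases ht : t ∈ Nᶜ
      · have : (fun p : Ed d × Ed d => (Nᶜ).indicator (fun s => L s p.1 p.2) t) =
            fun p : Ed d × Ed d => L t p.1 p.2 := by
          funext p
          rw [indicator_of_mem ht]
        rw [this]
        have ht2 : t ∉ N := ht
        have : ContDiff ℝ 1 fun p : Ed d × Ed d => L t p.1 p.2 := by
          by_contra hcon
          exact ht2 (subset_toMeasurable _ _ hcon)
        exact this.continuous
      · have : (fun p : Ed d × Ed d => (Nᶜ).indicator (fun s => L s p.1 p.2) t) =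
            fun _ : Ed d × Ed d => (0:ℝ) := by
          funext p
          rw [indicator_of_notMem ht]
        rw [this]
        exact continuous_const
    have hu_meas : ∀ p : Ed d × Ed d, Measurable fun t =>
        (Nᶜ).indicator (fun s => L s p.1 p.2) t :=
      fun p => (hmeas p.1 p.2).indicator hNmeas.compl
    exact measurable_uncurry_of_continuous_of_measurable hu_cont hu_meas
  · have h1 : ∀ᵐ t ∂μr, t ∉ N := (measure_eq_zero_iff_ae_notMem).1 hNnull
    filter_upwards [h1] with t ht
    have heq : ∀ p : Ed d × Ed d, (Nᶜ).indicator (fun s => L s p.1 p.2) t = L t p.1 p.2 :=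
      fun p => Set.indicator_of_mem (show t ∈ Nᶜ from ht) _
    refine ⟨heq, ?_⟩
    by_contra hcon
    exact ht (subset_toMeasurable _ _ hcon)

lemma aesm_L_comp {T : ℝ} {L : ℝ → Ed d → Ed d → ℝ} {Lt : ℝ → Ed d × Ed d → ℝ}
    (hunc : Measurable fun q : (Ed d × Ed d) × ℝ => Lt q.2 q.1)
    (haeq : ∀ᵐ t ∂(volume.restrict (Icc (0:ℝ) T)), ∀ p : Ed d × Ed d, Lt t p = L t p.1 p.2)
    {f g : ℝ → Ed d} (hf : AEMeasurable f (volume.restrict (Icc (0:ℝ) T)))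
    (hg : AEMeasurable g (volume.restrict (Icc (0:ℝ) T))) :
    AEStronglyMeasurable (fun t => L t (f t) (g t)) (volume.restrict (Icc (0:ℝ) T)) := by
  have h1 : AEMeasurable (fun t => Lt t (f t, g t)) (volume.restrict (Icc (0:ℝ) T)) :=
    hunc.comp_aemeasurable (((hf.prodMk hg)).prodMk aemeasurable_id)
  refine h1.aestronglyMeasurable.congr ?_
  filter_upwards [haeq] with t ht
  exact ht (f t, g t)

lemma aesm_inner_grad {T : ℝ} {L : ℝ → Ed d → Ed d → ℝ} {Lt : ℝ → Ed d × Ed d → ℝ}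
    (hunc : Measurable fun q : (Ed d × Ed d) × ℝ => Lt q.2 q.1)
    (hmix : ∀ᵐ t ∂(volume.restrict (Icc (0:ℝ) T)),
      (∀ p : Ed d × Ed d, Lt t p = L t p.1 p.2) ∧
      ContDiff ℝ 1 fun p : Ed d × Ed d => L t p.1 p.2)
    {A B wx wy : ℝ → Ed d} (hA : AEMeasurable A (volume.restrict (Icc (0:ℝ) T)))
    (hB : AEMeasurable B (volume.restrict (Icc (0:ℝ) T)))
    (hwx : AEMeasurable wx (volume.restrict (Icc (0:ℝ) T)))
    (hwy : AEMeasurable wy (volume.restrict (Icc (0:ℝ) T))) :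
    AEStronglyMeasurable (fun t =>
      ⟪gradient (fun x' => L t x' (B t)) (A t), wx t⟫ +
      ⟪gradient (fun y' => L t (A t) y') (B t), wy t⟫)
      (volume.restrict (Icc (0:ℝ) T)) := by
  set μr := volume.restrict (Icc (0:ℝ) T) with hμr
  set q : ℕ → ℝ → ℝ := fun n t =>
    (Lt t (A t + ((n:ℝ)+1)⁻¹ • wx t, B t + ((n:ℝ)+1)⁻¹ • wy t) - Lt t (A t, B t)) *
      ((n:ℝ)+1) with hq
  have hqm : ∀ n, AEMeasurable (q n) μr := by
    intro n
    have hp1 : AEMeasurable (fun t => Lt t (A t + ((n:ℝ)+1)⁻¹ • wx t,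
        B t + ((n:ℝ)+1)⁻¹ • wy t)) μr :=
      hunc.comp_aemeasurable
        (((hA.add (hwx.const_smul ((n:ℝ)+1)⁻¹)).prodMk (hB.add (hwy.const_smul ((n:ℝ)+1)⁻¹))).prodMk
          aemeasurable_id)
    have hp2 : AEMeasurable (fun t => Lt t (A t, B t)) μr :=
      hunc.comp_aemeasurable ((hA.prodMk hB).prodMk aemeasurable_id)
    exact ((hp1.sub hp2).mul_const _)
  have htend : ∀ᵐ t ∂μr, Tendsto (fun n => q n t) atTop
      (𝓝 (⟪gradient (fun x' => L t x' (B t)) (A t), wx t⟫ +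
        ⟪gradient (fun y' => L t (A t) y') (B t), wy t⟫)) := by
    filter_upwards [hmix] with t hmixt
    obtain ⟨heq, hC⟩ := hmixt
    have hder := chain_rule (f := fun p : Ed d × Ed d => L t p.1 p.2) hC
      (A t) (B t) (wx t) (wy t) 0
    simp only [zero_smul, add_zero] at hder
    have hsl := slope_seq hder
    refine hsl.congr fun n => ?_
    simp [hq, heq]
  exact (aemeasurable_of_tendsto_metrizable_ae' hqm htend).aestronglyMeasurable

lemma le_mul_csInf {S : Set ℝ} (hne : S.Nonempty) {C X y : ℝ} (hC : 0 < C)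
    (h : ∀ k ∈ S, X ≤ C * (y + k)) : X ≤ C * (y + sInf S) := by
  have h2 : ∀ k ∈ S, X / C - y ≤ k := by
    intro k hk
    have := h k hk
    rw [sub_le_iff_le_add, div_le_iff₀ hC]
    nlinarith [h k hk]
  have h3 : X / C - y ≤ sInf S := le_csInf hne h2
  have h4 : X / C ≤ y + sInf S := by linarith
  calc X = (X / C) * C := by field_simp
    _ ≤ (y + sInf S) * C := mul_le_mul_of_nonneg_right h4 hC.le
    _ = C * (y + sInf S) := by ring

end St14

set_option maxHeartbeats 2000000

/-- **Gâteaux differentiability of the action integral.** If `L`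
satisfies (S) and `u ∈ W^1L^Φ` with `d(u', L^∞) < Λ`, then for every `v ∈ W^1L^Φ` the
map `s ↦ I(u + sv)` is finite for small `|s|` and differentiable at `s = 0` with
derivative `∫_0^T ∇ₓL⬝v + ∇_yL⬝v' dt`, and this expression is a bounded linear
functional of `v` on `W^1L^Φ`. -/
theorem statement14 {d : ℕ} (T : ℝ) (hT : 0 < T) (Φ : Ed d → ℝ) (hΦ : IsNInf Φ)
    (L : ℝ → Ed d → Ed d → ℝ) (lam Lam : ℝ) (hlam : 0 < lam) (hLam : 0 < Lam)
    (hLC : CaraL T L) (hLS : CondS T Φ L lam Lam)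
    (u u' : ℝ → Ed d) (hu : MemW1Lphi T Φ u u') (hdist : distLinf T Φ u' < Lam) :
    (∀ v v' : ℝ → Ed d, MemW1Lphi T Φ v v' →
      (∃ ε > (0:ℝ), ∀ s : ℝ, |s| < ε →
        IntegrableOn (fun t => L t (u t + s • v t) (u' t + s • v' t)) (Icc (0:ℝ) T)) ∧
      HasDerivAt (fun s : ℝ => ∫ t in Icc (0:ℝ) T, L t (u t + s • v t) (u' t + s • v' t))
        (∫ t in Icc (0:ℝ) T,
          (⟪gradient (fun x' => L t x' (u' t)) (u t), v t⟫ +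
            ⟪gradient (fun y' => L t (u t) y') (u' t), v' t⟫)) 0) ∧
    ∃ C : ℝ, ∀ v v' : ℝ → Ed d, MemW1Lphi T Φ v v' →
      |∫ t in Icc (0:ℝ) T,
          (⟪gradient (fun x' => L t x' (u' t)) (u t), v t⟫ +
            ⟪gradient (fun y' => L t (u t) y') (u' t), v' t⟫)| ≤
        C * (luxNorm T Φ v + luxNorm T Φ v') := by
  classical
  obtain ⟨hu'int, ⟨hu'meas, l₀, hl₀, hρu'⟩, hurep⟩ := hu
  obtain ⟨a, b, hacont, ha0, hbint, hb0, hS⟩ := hLS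
  obtain ⟨Lt, hunc, hmix⟩ := St14.exists_tilde hLC
  have haeq : ∀ᵐ t ∂(volume.restrict (Icc (0:ℝ) T)), ∀ p : Ed d × Ed d, Lt t p = L t p.1 p.2 :=
    hmix.mono fun t ht => ht.1
  have hΦcont : Continuous Φ := hΦ.1.continuous
  have hΦ0 : ∀ y, 0 ≤ Φ y := hΦ.2.2.1
  have hmem : ∀ᵐ t ∂(volume.restrict (Icc (0:ℝ) T)), t ∈ Icc (0:ℝ) T :=
    ae_restrict_mem measurableSet_Icc
  obtain ⟨huint, humeas⟩ := St14.integrableOn_of_rep hT.le hu'int hurep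
  set Mu : ℝ := ‖u 0‖ + ∫ s in Icc (0:ℝ) T, ‖u' s‖ with hMudef
  have hMu : ∀ t ∈ Icc (0:ℝ) T, ‖u t‖ ≤ Mu := St14.norm_le_of_rep hu'int hurep
  have hMu0 : 0 ≤ Mu := le_trans (norm_nonneg _) (hMu 0 ⟨le_refl 0, hT.le⟩)
  clear_value Mu
  have hlux_nonneg : ∀ g : ℝ → Ed d, 0 ≤ luxNorm T Φ g := by
    intro g
    apply Real.sInf_nonneg
    rintro x ⟨hx, -⟩
    exact hx.le
  -- extract `v₀` and `ℓ` from the distance hypothesis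
  have hSd_ne : {r : ℝ | ∃ w : ℝ → Ed d, Measurable w ∧ (∃ C : ℝ, ∀ t, ‖w t‖ ≤ C) ∧
      r = luxNorm T Φ (fun t => u' t - w t)}.Nonempty :=
    ⟨luxNorm T Φ (fun t => u' t - (fun _ : ℝ => (0:Ed d)) t), (fun _ => 0), measurable_const,
      ⟨0, fun t => by simp⟩, rfl⟩
  have hSd_bdd : BddBelow {r : ℝ | ∃ w : ℝ → Ed d, Measurable w ∧ (∃ C : ℝ, ∀ t, ‖w t‖ ≤ C) ∧
      r = luxNorm T Φ (fun t => u' t - w t)} := by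
    refine ⟨0, ?_⟩
    rintro r ⟨w, -, -, rfl⟩
    exact hlux_nonneg _
  rw [distLinf] at hdist
  obtain ⟨r₀, hr₀mem, hr₀lt⟩ := (csInf_lt_iff hSd_bdd hSd_ne).1 hdist
  obtain ⟨v₀, hv₀meas, ⟨C₀, hC₀⟩, rfl⟩ := hr₀mem
  have hC₀0 : 0 ≤ C₀ := le_trans (norm_nonneg _) (hC₀ 0)
  set w : ℝ → Ed d := fun t => u' t - v₀ t with hwdef
  have hwmeas : AEMeasurable w (volume.restrict (Icc (0:ℝ) T)) :=
    hu'meas.sub hv₀meas.aemeasurable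
  clear_value w
  obtain ⟨K₃, hK₃0, hK₃⟩ := St14.bound_on_ball hΦcont (l₀ * C₀)
  have hwfin : rhoE T Φ (fun t => (l₀/2) • w t) < ⊤ := by
    have hpt : ∀ t, Φ ((l₀/2) • w t) ≤ Φ (l₀ • u' t) + K₃ := by
      intro t
      have hidw : (l₀/2) • w t =
          (1/2 : ℝ) • (l₀ • u' t) + (1 - (1/2) : ℝ) • (-(l₀ • v₀ t)) := by
        rw [hwdef]
        simp only [smul_sub, smul_smul, smul_neg]
        norm_num
        rw [← sub_eq_add_neg]
        congr 1 <;> [skip; skip] <;> congr 1 <;> ring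
      have h1 : Φ ((1/2 : ℝ) • (l₀ • u' t) + (1 - (1/2) : ℝ) • (-(l₀ • v₀ t))) ≤
          (1/2) * Φ (l₀ • u' t) + (1 - (1/2)) * Φ (-(l₀ • v₀ t)) :=
        St14.convex2 hΦ (by norm_num) (by norm_num) _ _
      rw [hidw]
      have h2 : Φ (-(l₀ • v₀ t)) = Φ (l₀ • v₀ t) := hΦ.2.2.2.2.2.1 _
      have h3 : Φ (l₀ • v₀ t) ≤ K₃ := by
        refine hK₃ _ ?_
        rw [norm_smul, Real.norm_eq_abs, abs_of_pos hl₀]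
        exact mul_le_mul_of_nonneg_left (hC₀ t) hl₀.le
      have h4 := hΦ0 (l₀ • u' t)
      rw [h2] at h1
      linarith only [h1, h3, h4, hK₃0]
    have hle : rhoE T Φ (fun t => (l₀/2) • w t) ≤
        rhoE T Φ (fun t => l₀ • u' t) + ENNReal.ofReal K₃ * volume (Icc (0:ℝ) T) := by
      calc rhoE T Φ (fun t => (l₀/2) • w t)
          ≤ ∫⁻ t in Icc (0:ℝ) T,
            (ENNReal.ofReal (Φ (l₀ • u' t)) + ENNReal.ofReal K₃) := by
            refine lintegral_mono fun t => ?_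
            refine le_trans (ENNReal.ofReal_le_ofReal (hpt t)) ?_
            exact ENNReal.ofReal_add_le
        _ = rhoE T Φ (fun t => l₀ • u' t) + ENNReal.ofReal K₃ * volume (Icc (0:ℝ) T) := by
            rw [lintegral_add_right' _ aemeasurable_const, lintegral_const,
              Measure.restrict_apply_univ]
            rfl
    refine lt_of_le_of_lt hle ?_
    refine ENNReal.add_lt_top.2 ⟨hρu', ?_⟩
    exact ENNReal.mul_lt_top ENNReal.ofReal_lt_top (by rw [Real.volume_Icc]; exact ENNReal.ofReal_lt_top)
  obtain ⟨k₀, hk₀, hρk₀⟩ := St14.exists_lux_of_rho_finite hΦ (by positivity : (0:ℝ) < l₀/2) hwfin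
  have hSw_bdd : BddBelow {l : ℝ | 0 < l ∧ rhoE T Φ (fun t => l⁻¹ • w t) ≤ 1} :=
    ⟨0, fun x hx => hx.1.le⟩
  rw [luxNorm] at hr₀lt
  obtain ⟨ℓ, hℓmem, hℓΛ⟩ := (csInf_lt_iff hSw_bdd ⟨k₀, hk₀, hρk₀⟩).1 hr₀lt
  obtain ⟨hℓ0, hρw⟩ := hℓmem
  -- constants
  set al := ℓ / Lam with haldef
  have hal0 : 0 < al := div_pos hℓ0 hLam
  have hal1 : al < 1 := (div_lt_one hLam).2 hℓΛ
  set be := (1 - al)/2 with hbedef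
  have hbe0 : 0 < be := by rw [hbedef]; linarith only [hal1]
  set c₁ := (be * Lam)⁻¹ with hc₁def
  have hc₁0 : 0 < c₁ := inv_pos.2 (mul_pos hbe0 hLam)
  obtain ⟨K₀, hK₀0, hK₀⟩ := St14.bound_on_ball hΦcont (c₁ * C₀)
  have e1 : al * ℓ⁻¹ = Lam⁻¹ := by
    rw [haldef]
    field_simp
  have e2 : be * c₁ = Lam⁻¹ := by
    rw [hc₁def, mul_inv]
    rw [← mul_assoc, mul_inv_cancel₀ hbe0.ne', one_mul]
  set c₂ := ((1 - al) * Lam)⁻¹ with hc₂def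
  have hc₂0 : 0 < c₂ := inv_pos.2 (mul_pos (by linarith) hLam)
  obtain ⟨K₂, hK₂0, hK₂⟩ := St14.bound_on_ball hΦcont (c₂ * C₀)
  have e3 : (1 - al) * c₂ = Lam⁻¹ := by
    rw [hc₂def, mul_inv]
    rw [← mul_assoc, mul_inv_cancel₀ (by linarith : (1:ℝ) - al ≠ 0), one_mul]
  clear_value al be c₁ c₂
  have hphiu'_pt : ∀ t, Φ (Lam⁻¹ • u' t) ≤ al * Φ (ℓ⁻¹ • w t) + (1 - al) * K₂ := by
    intro t
    have hid : Lam⁻¹ • u' t = al • (ℓ⁻¹ • w t) + (1 - al) • (c₂ • v₀ t) := by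
      rw [smul_smul, smul_smul, e1, e3, hwdef]
      rw [smul_sub]
      abel
    rw [hid]
    have h1 := St14.convex2 hΦ hal0.le hal1.le (ℓ⁻¹ • w t) (c₂ • v₀ t)
    have h2 : Φ (c₂ • v₀ t) ≤ K₂ := by
      refine hK₂ _ ?_
      rw [norm_smul, Real.norm_eq_abs, abs_of_pos hc₂0]
      exact mul_le_mul_of_nonneg_left (hC₀ t) hc₂0.le
    have h3 := mul_le_mul_of_nonneg_left h2 (by linarith only [hal1] : (0:ℝ) ≤ 1 - al)
    linarith only [h1, h3]
  have hDwint : IntegrableOn (fun t => Φ (ℓ⁻¹ • w t)) (Icc (0:ℝ) T) :=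
    St14.integrableOn_phi_comp hΦ (hwmeas.const_smul ℓ⁻¹) (lt_of_le_of_lt hρw ENNReal.one_lt_top)
  have hIccfin : volume (Icc (0:ℝ) T) < ⊤ := by
    rw [Real.volume_Icc]; exact ENNReal.ofReal_lt_top
  have hconstint : ∀ c : ℝ, IntegrableOn (fun _ : ℝ => c) (Icc (0:ℝ) T) := fun c =>
    integrableOn_const hIccfin.ne
  have hphiu'int : IntegrableOn (fun t => Φ (Lam⁻¹ • u' t)) (Icc (0:ℝ) T) := by
    refine Integrable.mono' (g := fun t => al * Φ (ℓ⁻¹ • w t) + (1 - al) * K₂)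
      (by exact (hDwint.const_mul al).add (hconstint ((1-al)*K₂))) ?_ ?_
    · exact (hΦcont.measurable.comp_aemeasurable
        (hu'meas.const_smul Lam⁻¹)).aestronglyMeasurable
    · refine Eventually.of_forall fun t => ?_
      rw [Real.norm_eq_abs, abs_of_nonneg (hΦ0 _)]
      exact hphiu'_pt t
  constructor
  · -- Part 1: Gâteaux differentiability
    intro v v' hv
    obtain ⟨hv'int, ⟨hv'meas, l₁, hl₁, hρv'⟩, hvrep⟩ := hv
    obtain ⟨hvint, hvmeas⟩ := St14.integrableOn_of_rep hT.le hv'int hvrep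
    set Mv : ℝ := ‖v 0‖ + ∫ s in Icc (0:ℝ) T, ‖v' s‖ with hMvdef
    have hMv : ∀ t ∈ Icc (0:ℝ) T, ‖v t‖ ≤ Mv := St14.norm_le_of_rep hv'int hvrep
    have hMv0 : 0 ≤ Mv := le_trans (norm_nonneg _) (hMv 0 ⟨le_refl 0, hT.le⟩)
    clear_value Mv
    obtain ⟨A₁, hA₁0, hA₁⟩ := St14.bound_on_ball hacont (Mu + Mv)
    set ε := min (l₁ / c₁) 1 with hεdef
    have hε0 : 0 < ε := lt_min (div_pos hl₁ hc₁0) one_pos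
    have hε1 : ε ≤ 1 := min_le_right _ _
    have hc₁ε : c₁ * ε ≤ l₁ := by
      calc c₁ * ε ≤ c₁ * (l₁ / c₁) := by
            exact mul_le_mul_of_nonneg_left (min_le_left _ _) hc₁0.le
        _ = l₁ := by field_simp
    clear_value ε
    set Dv := fun t => al * Φ (ℓ⁻¹ • w t) + be * K₀ + be * Φ (l₁ • v' t) with hDvdef
    clear_value Dv
    have hv'Φint : IntegrableOn (fun t => Φ (l₁ • v' t)) (Icc (0:ℝ) T) :=
      St14.integrableOn_phi_comp hΦ (hv'meas.const_smul l₁) hρv'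
    have hDvint : IntegrableOn Dv (Icc (0:ℝ) T) := by
      rw [hDvdef]
      exact ((hDwint.const_mul al).add (hconstint (be * K₀))).add (hv'Φint.const_mul be)
    have hdom : ∀ s : ℝ, |s| ≤ ε → ∀ t : ℝ, Φ (Lam⁻¹ • (u' t + s • v' t)) ≤ Dv t := by
      intro s hs t
      have hid : Lam⁻¹ • (u' t + s • v' t) =
          al • (ℓ⁻¹ • w t) + be • (c₁ • v₀ t) + be • (c₁ • (s • v' t)) := by
        rw [smul_smul, smul_smul, smul_smul, e1, e2, hwdef]
        rw [smul_add, smul_sub]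
        abel
      rw [hid]
      have h3 := St14.convex3 hΦ hal0.le hbe0 (by rw [hbedef]; ring)
        (ℓ⁻¹ • w t) (c₁ • v₀ t) (c₁ • (s • v' t))
      refine h3.trans ?_
      have hK₀t : Φ (c₁ • v₀ t) ≤ K₀ := by
        refine hK₀ _ ?_
        rw [norm_smul, Real.norm_eq_abs, abs_of_pos hc₁0]
        exact mul_le_mul_of_nonneg_left (hC₀ t) hc₁0.le
      have hst : Φ (c₁ • (s • v' t)) ≤ Φ (l₁ • v' t) := by
        rw [smul_smul]
        refine St14.phi_smul_abs_le hΦ hl₁ ?_ _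
        rw [abs_mul, abs_of_pos hc₁0]
        calc c₁ * |s| ≤ c₁ * ε := mul_le_mul_of_nonneg_left hs hc₁0.le
          _ ≤ l₁ := hc₁ε
      rw [hDvdef]
      have hb1 := mul_le_mul_of_nonneg_left hK₀t hbe0.le
      have hb2 := mul_le_mul_of_nonneg_left hst hbe0.le
      linarith only [hb1, hb2]
    set F' : ℝ → ℝ → ℝ := fun s t =>
      ⟪gradient (fun x' => L t x' (u' t + s • v' t)) (u t + s • v t), v t⟫ +
      ⟪gradient (fun y' => L t (u t + s • v t) y') (u' t + s • v' t), v' t⟫ with hF'def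
    set g := fun t => A₁ * (b t + Dv t) * Mv +
      (lam / l₁) * (Φ (l₁ • v' t) + A₁ * (b t + Dv t)) with hgdef
    have hgint : IntegrableOn g (Icc (0:ℝ) T) := by
      rw [hgdef]
      exact (((hbint.add hDvint).const_mul A₁).mul_const Mv).add
        ((hv'Φint.add ((hbint.add hDvint).const_mul A₁)).const_mul (lam / l₁))
    have hEb : ∀ᵐ t ∂(volume.restrict (Icc (0:ℝ) T)), ∀ s : ℝ, |s| ≤ ε →
        a (u t + s • v t) * (b t + Φ (Lam⁻¹ • (u' t + s • v' t))) ≤ A₁ * (b t + Dv t) := by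
      filter_upwards [hmem] with t ht
      intro s hs
      have hx : ‖u t + s • v t‖ ≤ Mu + Mv := by
        refine (norm_add_le _ _).trans ?_
        have h1 : ‖s • v t‖ ≤ Mv := by
          rw [norm_smul, Real.norm_eq_abs]
          exact (mul_le_of_le_one_left (norm_nonneg _) (hs.trans hε1)).trans (hMv t ht)
        exact add_le_add (hMu t ht) h1
      have h2 : 0 ≤ b t + Φ (Lam⁻¹ • (u' t + s • v' t)) := add_nonneg (hb0 t) (hΦ0 _)
      have h3 : b t + Φ (Lam⁻¹ • (u' t + s • v' t)) ≤ b t + Dv t := by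
        linarith only [hdom s hs t]
      calc a (u t + s • v t) * (b t + Φ (Lam⁻¹ • (u' t + s • v' t)))
          ≤ A₁ * (b t + Φ (Lam⁻¹ • (u' t + s • v' t))) :=
            mul_le_mul_of_nonneg_right (hA₁ _ hx) h2
        _ ≤ A₁ * (b t + Dv t) := mul_le_mul_of_nonneg_left h3 hA₁0
    have hFs_meas : ∀ s : ℝ, AEStronglyMeasurable
        (fun t => L t (u t + s • v t) (u' t + s • v' t)) (volume.restrict (Icc (0:ℝ) T)) :=
      fun s => St14.aesm_L_comp hunc haeq (humeas.add (hvmeas.const_smul s))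
        (hu'meas.add (hv'meas.const_smul s))
    have hFs_int : ∀ s : ℝ, |s| ≤ ε →
        IntegrableOn (fun t => L t (u t + s • v t) (u' t + s • v' t)) (Icc (0:ℝ) T) := by
      intro s hs
      refine Integrable.mono' (g := fun t => A₁ * (b t + Dv t))
        (by exact (hbint.add hDvint).const_mul A₁) (hFs_meas s) ?_
      filter_upwards [hS, hEb] with t hSt hEbt
      have h1 := hSt (u t + s • v t) (u' t + s • v' t)
      have h2 := norm_nonneg (gradient (fun x' => L t x' (u' t + s • v' t)) (u t + s • v t))
      have h3 := St14.conjFn_nonneg hΦ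
        (lam⁻¹ • gradient (fun y' => L t (u t + s • v t) y') (u' t + s • v' t))
      rw [Real.norm_eq_abs]
      linarith only [h1, h2, h3, hEbt s hs]
    have hF'meas : AEStronglyMeasurable (F' 0) (volume.restrict (Icc (0:ℝ) T)) := by
      have h0 := St14.aesm_inner_grad hunc hmix humeas hu'meas hvmeas hv'meas
      refine h0.congr (Eventually.of_forall fun t => ?_)
      simp only [hF'def, zero_smul, add_zero]
    have h_bound : ∀ᵐ t ∂(volume.restrict (Icc (0:ℝ) T)),
        ∀ s ∈ Metric.ball (0:ℝ) ε, ‖F' s t‖ ≤ g t := by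
      filter_upwards [hS, hEb, hmem] with t hSt hEbt ht
      intro s hs
      rw [Metric.mem_ball, Real.dist_eq, sub_zero] at hs
      have hsε : |s| ≤ ε := hs.le
      have hEb1 := hEbt s hsε
      have hcond := hSt (u t + s • v t) (u' t + s • v' t)
      set gx := gradient (fun x' => L t x' (u' t + s • v' t)) (u t + s • v t) with hgx
      set gy := gradient (fun y' => L t (u t + s • v t) y') (u' t + s • v' t) with hgy
      clear_value gx gy
      have habs0 : (0:ℝ) ≤ |L t (u t + s • v t) (u' t + s • v' t)| := abs_nonneg _
      have hconj0 : 0 ≤ conjFn Φ (lam⁻¹ • gy) := St14.conjFn_nonneg hΦ _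
      have hgxb : ‖gx‖ ≤ A₁ * (b t + Dv t) := by
        linarith only [hcond, hEb1, habs0, hconj0]
      have hconjb : conjFn Φ (lam⁻¹ • gy) ≤ A₁ * (b t + Dv t) := by
        linarith only [hcond, hEb1, habs0, norm_nonneg gx]
      have h1 : |⟪gx, v t⟫| ≤ A₁ * (b t + Dv t) * Mv := by
        refine (abs_real_inner_le_norm _ _).trans ?_
        exact mul_le_mul hgxb (hMv t ht) (norm_nonneg _) ((norm_nonneg gx).trans hgxb)
      have h2 : |⟪gy, v' t⟫| ≤ (lam / l₁) * (Φ (l₁ • v' t) + A₁ * (b t + Dv t)) := by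
        have hrw : ⟪gy, v' t⟫ = (lam / l₁) * ⟪lam⁻¹ • gy, l₁ • v' t⟫ := by
          rw [real_inner_smul_left, real_inner_smul_right]
          field_simp
        have hy1 : ⟪lam⁻¹ • gy, l₁ • v' t⟫ ≤ Φ (l₁ • v' t) + conjFn Φ (lam⁻¹ • gy) := by
          rw [real_inner_comm]
          exact St14.young hΦ _ _
        have hy2 : -⟪lam⁻¹ • gy, l₁ • v' t⟫ ≤ Φ (l₁ • v' t) + conjFn Φ (lam⁻¹ • gy) := by
          have hyoung := St14.young hΦ (-(l₁ • v' t)) (lam⁻¹ • gy)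
          rw [hΦ.2.2.2.2.2.1, inner_neg_left] at hyoung
          rw [real_inner_comm] at hyoung
          linarith only [hyoung]
        have habs2 : |⟪lam⁻¹ • gy, l₁ • v' t⟫| ≤ Φ (l₁ • v' t) + conjFn Φ (lam⁻¹ • gy) :=
          abs_le.2 ⟨by linarith only [hy2], hy1⟩
        rw [hrw, abs_mul, abs_of_pos (div_pos hlam hl₁)]
        refine mul_le_mul_of_nonneg_left ?_ (div_pos hlam hl₁).le
        linarith only [habs2, hconjb]
      rw [Real.norm_eq_abs]
      have hFst : F' s t = ⟪gx, v t⟫ + ⟪gy, v' t⟫ := by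
        simp only [hF'def]
        rw [← hgx, ← hgy]
      calc |F' s t| ≤ |⟪gx, v t⟫| + |⟪gy, v' t⟫| := by
            rw [hFst]
            exact abs_add_le _ _
        _ ≤ A₁ * (b t + Dv t) * Mv +
            (lam / l₁) * (Φ (l₁ • v' t) + A₁ * (b t + Dv t)) := add_le_add h1 h2
        _ = g t := by simp only [hgdef]
    have h_diff : ∀ᵐ t ∂(volume.restrict (Icc (0:ℝ) T)), ∀ s ∈ Metric.ball (0:ℝ) ε,
        HasDerivAt (fun r => L t (u t + r • v t) (u' t + r • v' t)) (F' s t) s := by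
      filter_upwards [hmix] with t htmix
      intro s _
      exact St14.chain_rule (f := fun p : Ed d × Ed d => L t p.1 p.2) htmix.2
        (u t) (u' t) (v t) (v' t) s
    obtain ⟨-, hHD⟩ := hasDerivAt_integral_of_dominated_loc_of_deriv_le
      (F := fun s t => L t (u t + s • v t) (u' t + s • v' t)) (F' := F')
      (μ := volume.restrict (Icc (0:ℝ) T)) (x₀ := (0:ℝ)) (bound := g)
      (Metric.ball_mem_nhds 0 hε0) (Eventually.of_forall hFs_meas) (hFs_int 0 (by simp [hε0.le])) hF'meas
      h_bound hgint h_diff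
    refine ⟨⟨ε, hε0, fun s hs => hFs_int s hs.le⟩, ?_⟩
    have hcongr : F' 0 = fun t =>
        (⟪gradient (fun x' => L t x' (u' t)) (u t), v t⟫ +
          ⟪gradient (fun y' => L t (u t) y') (u' t), v' t⟫) := by
      funext t
      simp only [hF'def, zero_smul, add_zero]
    rw [← hcongr]
    exact hHD
  · -- Part 2: boundedness of the differential
    obtain ⟨M₂, hM₂0, hM₂⟩ := St14.conjFn_unit_bound hΦ
    set cM := 1 + T * M₂ with hcMdef
    have hcM0 : 0 < cM := by
      have h0 : 0 ≤ T * M₂ := mul_nonneg hT.le hM₂0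
      rw [hcMdef]
      linarith only [h0]
    obtain ⟨A₀, hA₀0, hA₀⟩ := St14.bound_on_ball hacont Mu
    set bz := fun t => A₀ * (b t + Φ (Lam⁻¹ • u' t)) with hbzdef
    have hbzint : IntegrableOn bz (Icc (0:ℝ) T) := by
      rw [hbzdef]
      exact (hbint.add hphiu'int).const_mul A₀
    have hbz0 : ∀ t, 0 ≤ bz t := fun t =>
      mul_nonneg hA₀0 (add_nonneg (hb0 t) (hΦ0 _))
    clear_value bz
    set B₀ := ∫ t in Icc (0:ℝ) T, bz t with hB₀def
    have hB₀0 : 0 ≤ B₀ := setIntegral_nonneg measurableSet_Icc fun t _ => hbz0 t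
    clear_value B₀
    have hTi : 0 ≤ T⁻¹ := (inv_pos.2 hT).le
    clear_value cM
    set C := B₀ * T⁻¹ * cM + B₀ * cM + lam * (1 + B₀) * cM + 1 with hCdef
    have hC0 : 0 < C := by
      have h1 : 0 ≤ B₀ * T⁻¹ * cM := mul_nonneg (mul_nonneg hB₀0 hTi) hcM0.le
      have h2 : 0 ≤ B₀ * cM := mul_nonneg hB₀0 hcM0.le
      have h3 : 0 ≤ lam * (1 + B₀) * cM :=
        mul_nonneg (mul_nonneg hlam.le (by linarith only [hB₀0])) hcM0.le
      rw [hCdef]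
      linarith only [h1, h2, h3]
    clear_value C
    refine ⟨C, fun v v' hv => ?_⟩
    obtain ⟨hv'int, ⟨hv'meas, l₁, hl₁, hρv'⟩, hvrep⟩ := hv
    obtain ⟨hvint, hvmeas⟩ := St14.integrableOn_of_rep hT.le hv'int hvrep
    set Mv : ℝ := ‖v 0‖ + ∫ s in Icc (0:ℝ) T, ‖v' s‖ with hMvdef
    have hMv : ∀ t ∈ Icc (0:ℝ) T, ‖v t‖ ≤ Mv := St14.norm_le_of_rep hv'int hvrep
    have hvbound0 := St14.norm_le_emb hT hv'int hvint hvrep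
    set Iv := ∫ r in Icc (0:ℝ) T, ‖v r‖ with hIvdef
    set Iv' := ∫ r in Icc (0:ℝ) T, ‖v' r‖ with hIv'def
    have hIv0 : 0 ≤ Iv := by
      rw [hIvdef]
      exact setIntegral_nonneg measurableSet_Icc fun t _ => norm_nonneg _
    have hIv'0 : 0 ≤ Iv' := by
      rw [hIv'def]
      exact setIntegral_nonneg measurableSet_Icc fun t _ => norm_nonneg _
    have hvbound : ∀ t ∈ Icc (0:ℝ) T, ‖v t‖ ≤ T⁻¹ * Iv + Iv' := hvbound0
    clear_value Iv Iv'
    have hSvB0 : 0 ≤ T⁻¹ * Iv + Iv' := add_nonneg (mul_nonneg hTi hIv0) hIv'0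
    -- the two pieces of the integrand
    set f1 := fun t => ⟪gradient (fun x' => L t x' (u' t)) (u t), v t⟫ with hf1def
    set f2 := fun t => ⟪gradient (fun y' => L t (u t) y') (u' t), v' t⟫ with hf2def
    have hf1meas : AEStronglyMeasurable f1 (volume.restrict (Icc (0:ℝ) T)) := by
      have h0 := St14.aesm_inner_grad hunc hmix humeas hu'meas hvmeas
        (aemeasurable_const (b := (0:Ed d)))
      refine h0.congr (Eventually.of_forall fun t => ?_)
      simp [hf1def]
    have hf2meas : AEStronglyMeasurable f2 (volume.restrict (Icc (0:ℝ) T)) := by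
      have h0 := St14.aesm_inner_grad hunc hmix humeas hu'meas
        (aemeasurable_const (b := (0:Ed d))) hv'meas
      refine h0.congr (Eventually.of_forall fun t => ?_)
      simp [hf2def]
    -- a.e. bounds from the structure condition at (u t, u' t)
    have hcondu : ∀ᵐ t ∂(volume.restrict (Icc (0:ℝ) T)),
        ‖gradient (fun x' => L t x' (u' t)) (u t)‖ ≤ bz t ∧
        conjFn Φ (lam⁻¹ • gradient (fun y' => L t (u t) y') (u' t)) ≤ bz t := by
      filter_upwards [hS, hmem] with t hSt ht
      have hcond := hSt (u t) (u' t)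
      have hau : a (u t) ≤ A₀ := hA₀ _ (hMu t ht)
      have h2 : 0 ≤ b t + Φ (Lam⁻¹ • u' t) := add_nonneg (hb0 t) (hΦ0 _)
      have hE : a (u t) * (b t + Φ (Lam⁻¹ • u' t)) ≤ bz t := by
        rw [hbzdef]
        exact mul_le_mul_of_nonneg_right hau h2
      have habs0 := abs_nonneg (L t (u t) (u' t))
      have hconj0 := St14.conjFn_nonneg hΦ
        (lam⁻¹ • gradient (fun y' => L t (u t) y') (u' t))
      have hnorm0 := norm_nonneg (gradient (fun x' => L t x' (u' t)) (u t))
      exact ⟨by linarith only [hcond, hE, habs0, hconj0],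
        by linarith only [hcond, hE, habs0, hnorm0]⟩
    -- Young-type bound for f2 with parameter k
    have hf2young : ∀ k : ℝ, 0 < k → ∀ᵐ t ∂(volume.restrict (Icc (0:ℝ) T)),
        ‖f2 t‖ ≤ lam * k * (Φ (k⁻¹ • v' t) + bz t) := by
      intro k hk
      filter_upwards [hcondu] with t hct
      set gy := gradient (fun y' => L t (u t) y') (u' t) with hgy
      clear_value gy
      have hrw : f2 t = (lam * k) * ⟪lam⁻¹ • gy, k⁻¹ • v' t⟫ := by
        simp only [hf2def]
        rw [← hgy]
        rw [real_inner_smul_left, real_inner_smul_right]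
        field_simp
      have hy1 : ⟪lam⁻¹ • gy, k⁻¹ • v' t⟫ ≤ Φ (k⁻¹ • v' t) + conjFn Φ (lam⁻¹ • gy) := by
        rw [real_inner_comm]
        exact St14.young hΦ _ _
      have hy2 : -⟪lam⁻¹ • gy, k⁻¹ • v' t⟫ ≤ Φ (k⁻¹ • v' t) + conjFn Φ (lam⁻¹ • gy) := by
        have hyoung := St14.young hΦ (-(k⁻¹ • v' t)) (lam⁻¹ • gy)
        rw [hΦ.2.2.2.2.2.1, inner_neg_left] at hyoung
        rw [real_inner_comm] at hyoung
        linarith only [hyoung]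
      have habs2 : |⟪lam⁻¹ • gy, k⁻¹ • v' t⟫| ≤ Φ (k⁻¹ • v' t) + conjFn Φ (lam⁻¹ • gy) :=
        abs_le.2 ⟨by linarith only [hy2], hy1⟩
      rw [Real.norm_eq_abs, hrw, abs_mul, abs_of_pos (mul_pos hlam hk)]
      refine mul_le_mul_of_nonneg_left ?_ (mul_pos hlam hk).le
      linarith only [habs2, hct.2]
    -- integrability of f1, f2
    have hf1b : ∀ᵐ t ∂(volume.restrict (Icc (0:ℝ) T)),
        ‖f1 t‖ ≤ bz t * (T⁻¹ * Iv + Iv') := by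
      filter_upwards [hcondu, hmem] with t hct ht
      rw [Real.norm_eq_abs, hf1def]
      refine (abs_real_inner_le_norm _ _).trans ?_
      exact mul_le_mul hct.1 (hvbound t ht) (norm_nonneg _)
        ((norm_nonneg _).trans hct.1)
    have hf1bint : IntegrableOn (fun t => bz t * (T⁻¹ * Iv + Iv')) (Icc (0:ℝ) T) :=
      hbzint.mul_const _
    have hf1int : IntegrableOn f1 (Icc (0:ℝ) T) :=
      Integrable.mono' hf1bint hf1meas hf1b
    have hρv'fin : rhoE T Φ (fun t => l₁ • v' t) < ⊤ := hρv'
    have hv'Φint : IntegrableOn (fun t => Φ (l₁ • v' t)) (Icc (0:ℝ) T) :=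
      St14.integrableOn_phi_comp hΦ (hv'meas.const_smul l₁) hρv'fin
    have hf2int : IntegrableOn f2 (Icc (0:ℝ) T) := by
      have hb2 := hf2young l₁⁻¹ (inv_pos.2 hl₁)
      refine Integrable.mono' (g := fun t => lam * l₁⁻¹ * (Φ (l₁ • v' t) + bz t))
        ?_ hf2meas ?_
      · exact (hv'Φint.add hbzint).const_mul _
      · refine hb2.mono fun t hbt => ?_
        simpa [inv_inv] using hbt
    have hsplit : (∫ t in Icc (0:ℝ) T, (f1 t + f2 t)) =
        (∫ t in Icc (0:ℝ) T, f1 t) + ∫ t in Icc (0:ℝ) T, f2 t :=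
      integral_add hf1int hf2int
    -- bound |∫ f1|
    have hIf1 : |∫ t in Icc (0:ℝ) T, f1 t| ≤ B₀ * (T⁻¹ * Iv + Iv') := by
      have h := norm_integral_le_of_norm_le hf1bint hf1b
      rw [Real.norm_eq_abs] at h
      refine h.trans ?_
      rw [integral_mul_const, hB₀def]
    -- per k bound for |∫ f2|
    have hIf2 : ∀ k : ℝ, 0 < k → rhoE T Φ (fun t => k⁻¹ • v' t) ≤ 1 →
        |∫ t in Icc (0:ℝ) T, f2 t| ≤ lam * k * (1 + B₀) := by
      intro k hk hρk
      have hΦkint : IntegrableOn (fun t => Φ (k⁻¹ • v' t)) (Icc (0:ℝ) T) :=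
        St14.integrableOn_phi_comp hΦ (hv'meas.const_smul k⁻¹)
          (lt_of_le_of_lt hρk ENNReal.one_lt_top)
      have hbnd : IntegrableOn (fun t => lam * k * (Φ (k⁻¹ • v' t) + bz t)) (Icc (0:ℝ) T) :=
        (hΦkint.add hbzint).const_mul _
      have h := norm_integral_le_of_norm_le hbnd (hf2young k hk)
      rw [Real.norm_eq_abs] at h
      refine h.trans ?_
      rw [integral_const_mul, integral_add hΦkint hbzint]
      have hφ1 : (∫ t in Icc (0:ℝ) T, Φ (k⁻¹ • v' t)) ≤ 1 :=
        St14.integral_phi_le_one hΦ (hv'meas.const_smul k⁻¹) hρk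
      have hlk : 0 ≤ lam * k := (mul_pos hlam hk).le
      rw [← hB₀def]
      exact mul_le_mul_of_nonneg_left (by linarith only [hφ1]) hlk
    -- Luxemburg-norm bounds for the L¹ norms
    have hIvk : ∀ k ∈ {l : ℝ | 0 < l ∧ rhoE T Φ (fun t => l⁻¹ • v t) ≤ 1}, Iv ≤ k * cM := by
      rintro k ⟨hk, hρk⟩
      have h := St14.integral_norm_le_lux hΦ hT.le hM₂0 hM₂ hvint hk hρk
      rw [hIvdef, hcMdef]
      exact h
    have hIv'k : ∀ k ∈ {l : ℝ | 0 < l ∧ rhoE T Φ (fun t => l⁻¹ • v' t) ≤ 1},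
        Iv' ≤ k * cM := by
      rintro k ⟨hk, hρk⟩
      have h := St14.integral_norm_le_lux hΦ hT.le hM₂0 hM₂ hv'int hk hρk
      rw [hIv'def, hcMdef]
      exact h
    have hSv_ne : {l : ℝ | 0 < l ∧ rhoE T Φ (fun t => l⁻¹ • v t) ≤ 1}.Nonempty := by
      obtain ⟨k, hk, hρk⟩ := St14.exists_lux_of_bounded hΦ hT.le hMv
      exact ⟨k, hk, hρk⟩
    have hSv'_ne : {l : ℝ | 0 < l ∧ rhoE T Φ (fun t => l⁻¹ • v' t) ≤ 1}.Nonempty := by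
      obtain ⟨k, hk, hρk⟩ := St14.exists_lux_of_rho_finite hΦ hl₁ hρv'fin
      exact ⟨k, hk, hρk⟩
    -- rewrite the goal in terms of f1, f2
    have hgoal_eq : (fun t => (⟪gradient (fun x' => L t x' (u' t)) (u t), v t⟫ +
        ⟪gradient (fun y' => L t (u t) y') (u' t), v' t⟫)) = fun t => f1 t + f2 t := by
      funext t
      simp only [hf1def, hf2def]
    rw [show (∫ t in Icc (0:ℝ) T,
        (⟪gradient (fun x' => L t x' (u' t)) (u t), v t⟫ +
          ⟪gradient (fun y' => L t (u t) y') (u' t), v' t⟫)) =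
        ∫ t in Icc (0:ℝ) T, (f1 t + f2 t) from by rw [hgoal_eq]]
    clear_value f1 f2
    -- main bound for every pair (kv, kv')
    set X := |∫ t in Icc (0:ℝ) T, (f1 t + f2 t)| with hXdef
    clear_value X
    have hmain : ∀ kv' ∈ {l : ℝ | 0 < l ∧ rhoE T Φ (fun t => l⁻¹ • v' t) ≤ 1},
        ∀ kv ∈ {l : ℝ | 0 < l ∧ rhoE T Φ (fun t => l⁻¹ • v t) ≤ 1},
        X ≤ C * (kv' + kv) := by
      rintro kv' ⟨hkv'0, hρkv'⟩ kv hkvmem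
      obtain ⟨hkv0, hρkv⟩ := hkvmem
      have h1 := hIf1
      have h2 := hIf2 kv' hkv'0 hρkv'
      have h3 := hIvk kv ⟨hkv0, hρkv⟩
      have h4 := hIv'k kv' ⟨hkv'0, hρkv'⟩
      have hX1 : X ≤ |∫ t in Icc (0:ℝ) T, f1 t| + |∫ t in Icc (0:ℝ) T, f2 t| := by
        rw [hXdef, hsplit]
        exact abs_add_le _ _
      have hTi : 0 ≤ T⁻¹ := (inv_pos.2 hT).le
      have h5a := mul_le_mul_of_nonneg_left h3 (mul_nonneg hB₀0 hTi)
      have h5b := mul_le_mul_of_nonneg_left h4 hB₀0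
      have h5 : B₀ * (T⁻¹ * Iv + Iv') ≤ B₀ * T⁻¹ * (kv * cM) + B₀ * (kv' * cM) := by
        have he : B₀ * (T⁻¹ * Iv + Iv') = B₀ * T⁻¹ * Iv + B₀ * Iv' := by ring
        rw [he]
        linarith only [h5a, h5b]
      have hcM1 : 1 ≤ cM := by
        have h00 := mul_nonneg hT.le hM₂0
        rw [hcMdef]
        linarith only [h00]
      have h6 : lam * kv' * (1 + B₀) ≤ lam * (1 + B₀) * cM * kv' := by
        have hq : 0 ≤ lam * kv' * (1 + B₀) := by positivity
        have h01 := mul_le_mul_of_nonneg_left hcM1 hq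
        linarith only [h01]
      have hA : X ≤ B₀ * T⁻¹ * (kv * cM) + B₀ * (kv' * cM) + lam * (1 + B₀) * cM * kv' := by
        linarith only [hX1, h1, h2, h5, h6]
      have p1 : 0 ≤ B₀ * T⁻¹ * cM * kv' := by positivity
      have p2 : 0 ≤ B₀ * cM * kv := by positivity
      have p3 : 0 ≤ lam * (1 + B₀) * cM * kv := by positivity
      rw [hCdef]
      linarith only [hA, p1, p2, p3, hkv0.le, hkv'0.le]
    have hstep1 : ∀ kv' ∈ {l : ℝ | 0 < l ∧ rhoE T Φ (fun t => l⁻¹ • v' t) ≤ 1},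
        X ≤ C * (kv' + sInf {l : ℝ | 0 < l ∧ rhoE T Φ (fun t => l⁻¹ • v t) ≤ 1}) := by
      intro kv' hkv'
      exact St14.le_mul_csInf hSv_ne hC0 (hmain kv' hkv')
    have hstep2 : X ≤ C * (sInf {l : ℝ | 0 < l ∧ rhoE T Φ (fun t => l⁻¹ • v t) ≤ 1} +
        sInf {l : ℝ | 0 < l ∧ rhoE T Φ (fun t => l⁻¹ • v' t) ≤ 1}) := by
      refine St14.le_mul_csInf hSv'_ne hC0 ?_
      intro k hk
      have h02 := hstep1 k hk
      linarith only [h02]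
    -- conclude
    rw [luxNorm, luxNorm]
    exact hstep2
end
end

section
/- Let d_1,…,d_k be positive integers, let Φ_j : ℝ^{d_j} → [0,∞) be N_∞ functions for j = 1,…,k, and let O_j : ℝ^d → ℝ^{d_j} be linear maps with ⋂_{j=1}^k ker O_j = {0}. Then Φ(y) := Σ_{j=1}^k Φ_j(O_j y) is an N_∞ function; in particular Φ(y)/|y| → +∞ as |y| → ∞. -/
open MeasureTheory Filter Set
open scoped ENNReal RealInnerProductSpace Topology

noncomputable section

variable {d : ℕ}

/-- If `Φ_j : ℝ^{d_j} → [0,∞)` are `N_∞` functions and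
`O_j : ℝ^d → ℝ^{d_j}` are linear maps with `⋂_j ker O_j = {0}`, then
`Φ(y) = Σ_j Φ_j(O_j y)` is an `N_∞` function; in particular `Φ(y)/|y| → ∞`. -/
theorem statement17 (d k : ℕ) (dv : Fin k → ℕ) (hdv : ∀ j, 0 < dv j)
    (Φs : ∀ j : Fin k, Ed (dv j) → ℝ) (hΦs : ∀ j, IsNInf (Φs j))
    (O : ∀ j : Fin k, Ed d →ₗ[ℝ] Ed (dv j))
    (hker : ∀ y : Ed d, (∀ j, O j y = 0) → y = 0) :
    IsNInf (fun y : Ed d => ∑ j, Φs j (O j y)) := by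
  have hOc : ∀ j : Fin k, Continuous (O j) := fun j => (O j).continuous_of_finiteDimensional
  -- key quantitative kernel bound
  have hc : ∃ c : ℝ, 0 < c ∧ ∀ y : Ed d, c * ‖y‖ ≤ ∑ j, ‖O j y‖ := by
    by_cases hd : ∀ y : Ed d, y = 0
    · exact ⟨1, one_pos, fun y => by simp [hd y]⟩
    · push_neg at hd
      obtain ⟨y₀, hy₀⟩ := hd
      have hsne : (Metric.sphere (0 : Ed d) 1).Nonempty := by
        refine ⟨‖y₀‖⁻¹ • y₀, ?_⟩
        simp [norm_smul, abs_of_nonneg (inv_nonneg.2 (norm_nonneg _)),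
          inv_mul_cancel₀ (norm_ne_zero_iff.2 hy₀)]
      have hcont : ContinuousOn (fun y : Ed d => ∑ j, ‖O j y‖) (Metric.sphere 0 1) :=
        (continuous_finset_sum _ fun j _ => (hOc j).norm).continuousOn
      obtain ⟨x, hx, hxmin⟩ := (isCompact_sphere (0 : Ed d) 1).exists_isMinOn hsne hcont
      have hxne : x ≠ 0 := by
        intro h
        simp [h] at hx
      have hcpos : 0 < ∑ j, ‖O j x‖ := by
        refine Finset.sum_pos' (fun j _ => norm_nonneg _) ?_
        by_contra h
        push_neg at h
        exact hxne (hker x fun j =>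
          norm_le_zero_iff.mp (h j (Finset.mem_univ j)))
      refine ⟨∑ j, ‖O j x‖, hcpos, fun y => ?_⟩
      rcases eq_or_ne y 0 with rfl | hy
      · simp
      · have hny : (0:ℝ) < ‖y‖ := norm_pos_iff.2 hy
        have hmem : ‖y‖⁻¹ • y ∈ Metric.sphere (0 : Ed d) 1 := by
          simp [norm_smul, abs_of_nonneg (inv_nonneg.2 (norm_nonneg _)),
            inv_mul_cancel₀ hny.ne']
        have hmin := hxmin hmem
        simp only [Set.mem_setOf_eq] at hmin
        have hsum : ∑ j, ‖O j (‖y‖⁻¹ • y)‖ = ‖y‖⁻¹ * ∑ j, ‖O j y‖ := by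
          rw [Finset.mul_sum]
          refine Finset.sum_congr rfl fun j _ => ?_
          rw [_root_.map_smul, norm_smul, Real.norm_eq_abs, abs_of_nonneg (inv_nonneg.2 (norm_nonneg _))]
        rw [hsum] at hmin
        calc (∑ j, ‖O j x‖) * ‖y‖ ≤ (‖y‖⁻¹ * ∑ j, ‖O j y‖) * ‖y‖ :=
              mul_le_mul_of_nonneg_right hmin (norm_nonneg _)
          _ = ∑ j, ‖O j y‖ := by field_simp
  obtain ⟨c, hcpos, hclb⟩ := hc
  refine ⟨?_, ?_, ?_, ?_, ?_, ?_, ?_⟩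
  · exact Differentiable.fun_sum fun j _ =>
      (hΦs j).1.comp ((LinearMap.toContinuousLinearMap (O j)).differentiable)
  · have : ∀ j : Fin k, ConvexOn ℝ Set.univ (fun y : Ed d => Φs j (O j y)) := by
      intro j
      have := (hΦs j).2.1.comp_linearMap (O j)
      exact this
    have h2 : ConvexOn ℝ Set.univ (∑ j, fun y : Ed d => Φs j (O j y)) :=
      Finset.sum_induction _ _ (fun f g hf hg => hf.add hg)
        (convexOn_const 0 convex_univ) (fun j _ => this j)
    convert h2 using 1
    ext y
    simp [Finset.sum_apply]
  · exact fun y => Finset.sum_nonneg fun j _ => (hΦs j).2.2.1 _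
  · simp only [map_zero]
    exact Finset.sum_eq_zero fun j _ => (hΦs j).2.2.2.1
  · intro y hy
    have : ∃ j, O j y ≠ 0 := by
      by_contra h
      push_neg at h
      exact hy (hker y h)
    obtain ⟨j₀, hj₀⟩ := this
    exact Finset.sum_pos' (fun j _ => (hΦs j).2.2.1 _)
      ⟨j₀, Finset.mem_univ _, (hΦs j₀).2.2.2.2.1 _ hj₀⟩
  · intro y
    refine Finset.sum_congr rfl fun j _ => ?_
    rw [map_neg, (hΦs j).2.2.2.2.2.1]
  · rw [tendsto_atTop]
    intro M
    have hR : ∀ j : Fin k, ∃ R : ℝ, ∀ z : Ed (dv j), R ≤ ‖z‖ → M * k / c ≤ Φs j z / ‖z‖ := by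
      intro j
      have h := (hΦs j).2.2.2.2.2.2.eventually (eventually_ge_atTop (M * k / c))
      rw [eventually_comap, eventually_atTop] at h
      obtain ⟨R, hRR⟩ := h
      exact ⟨R, fun z hz => hRR ‖z‖ hz z rfl⟩
    choose R hR using hR
    set Rmax : ℝ := 1 + ∑ j, |R j| with hRmaxdef
    have hRmax1 : 1 ≤ Rmax :=
      le_add_of_le_of_nonneg le_rfl (Finset.sum_nonneg fun i _ => abs_nonneg _)
    have hRle : ∀ j, R j ≤ Rmax := fun j =>
      le_add_of_nonneg_of_le zero_le_one ((le_abs_self _).trans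
        (Finset.single_le_sum (fun i _ => abs_nonneg (R i)) (Finset.mem_univ j)))
    refine eventually_comap.2 ?_
    rw [eventually_atTop]
    refine ⟨max (Rmax * k / c) 1, fun b hb y hy => ?_⟩
    subst hy
    have hy1 : (1:ℝ) ≤ ‖y‖ := le_trans (le_max_right _ _) hb
    have hny : (0:ℝ) < ‖y‖ := lt_of_lt_of_le one_pos hy1
    have hyne : y ≠ 0 := norm_pos_iff.mp hny
    have hk0 : 0 < (k:ℝ) := by
      rcases Nat.eq_zero_or_pos k with hk | hk
      · exfalso
        have h0 := hclb y
        subst hk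
        simp only [Finset.univ_eq_empty, Finset.sum_empty] at h0
        nlinarith
      · exact_mod_cast hk
    -- pick j with large ‖O j y‖
    have hsumle : ∑ _j : Fin k, (c * ‖y‖ / k) ≤ ∑ j, ‖O j y‖ := by
      have : ∑ _j : Fin k, (c * ‖y‖ / k) = c * ‖y‖ := by
        rw [Finset.sum_const, Finset.card_univ, Fintype.card_fin, nsmul_eq_mul]
        field_simp
      rw [this]
      exact hclb y
    obtain ⟨j, _, hj⟩ := Finset.exists_le_of_sum_le
      (Finset.univ_nonempty_iff.mpr (Fin.pos_iff_nonempty.mp (by exact_mod_cast hk0))) hsumle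
    have hcyk : c * ‖y‖ / k ≤ ‖O j y‖ := hj
    have hRj : R j ≤ ‖O j y‖ := by
      have h1 : Rmax ≤ c * ‖y‖ / k := by
        rw [le_div_iff₀ hk0]
        have : Rmax * k / c ≤ ‖y‖ := le_trans (le_max_left _ _) hb
        calc Rmax * k = (Rmax * k / c) * c := by field_simp
          _ ≤ ‖y‖ * c := mul_le_mul_of_nonneg_right this hcpos.le
          _ = c * ‖y‖ := mul_comm _ _
      exact le_trans (le_trans (hRle j) h1) hcyk
    have hOjpos : 0 < ‖O j y‖ := lt_of_lt_of_le (by positivity : (0:ℝ) < c * ‖y‖ / k) hcyk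
    have hsl : M * k / c ≤ Φs j (O j y) / ‖O j y‖ := hR j _ hRj
    have hΦj : M * ‖y‖ ≤ Φs j (O j y) := by
      have h2 : (M * k / c) * ‖O j y‖ ≤ Φs j (O j y) := by
        rw [← le_div_iff₀ hOjpos]
        exact hsl
      rcases le_or_gt M 0 with hM | hM
      · exact le_trans (mul_nonpos_of_nonpos_of_nonneg hM (norm_nonneg _)) ((hΦs j).2.2.1 _)
      · calc M * ‖y‖ = (M * k / c) * (c * ‖y‖ / k) := by field_simp
          _ ≤ (M * k / c) * ‖O j y‖ := mul_le_mul_of_nonneg_left hcyk (by positivity)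
          _ ≤ Φs j (O j y) := h2
    have hsum : M * ‖y‖ ≤ ∑ i, Φs i (O i y) :=
      le_trans hΦj (Finset.single_le_sum (f := fun i => Φs i (O i y)) (fun i _ => (hΦs i).2.2.1 _) (Finset.mem_univ j))
    rw [le_div_iff₀ hny]
    exact hsum
end
end
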